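/- arXiv:1311.7113 — 2 statements merged into one kernel-verified Lean document; each statement's English description precedes it below -/
import Mathlib

section
/- Let t be a power of a prime and let r = t + 1. Then there exists an integer K_t such that for every integer k ≥ K_t for which k − 2 is a power of a prime, there exists a (k+r, k) systematic t-error-correcting code, i.e., a code C ⊆ S_{k+r} of size k! such that for every σ ∈ S_k there is exactly one α ∈ C with α_{↓k} = σ, and distinct codewords of C have Kendall τ-distance at least 2t+1. -/
/-- `AdjTrans σ π` : the sequence `π` is obtained from the sequence `σ` by exchanging
two distinct adjacent elements (an adjacent transposition). -/
def AdjTrans (σ π : List ℤ) : Prop :=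
  ∃ (l₁ l₂ : List ℤ) (a b : ℤ), a ≠ b ∧ σ = l₁ ++ a :: b :: l₂ ∧ π = l₁ ++ b :: a :: l₂

/-- `StepsTo n σ π` : `π` can be obtained from `σ` by a sequence of `n` adjacent
transpositions. -/
def StepsTo : ℕ → List ℤ → List ℤ → Prop
  | 0 => fun σ π => σ = π
  | n + 1 => fun σ π => ∃ τ, AdjTrans σ τ ∧ StepsTo n τ π

/-- The Kendall τ-distance between two sequences: the minimum number of adjacent
transpositions needed to transform one into the other. -/
noncomputable def dK (σ π : List ℤ) : ℕ := sInf {n | StepsTo n σ π}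

/-- The list `[a, a+1, ..., a+len-1]` of integers. -/
def rangeList (a len : ℕ) : List ℤ := (List.range' a len).map (fun x => (x : ℤ))

/-- The substitution map `T_θ`: the `r`-th occurrence (from the left, `0`-indexed) of a
rank `a` in `σ` is replaced by the `r`-th entry of the list `θ a`. -/
def Tmap (θ : ℤ → List ℤ) (σ : List ℤ) : List ℤ :=
  (List.range σ.length).map (fun j =>
    (θ (σ.getD j 0)).getD ((σ.take j).count (σ.getD j 0)) 0)

/-- `psiEntry σ a s` : the number of positions in `σ` strictly to the right of the `s`-th
occurrence (`0`-indexed) of `a` in `σ` that hold an element smaller than `a`. -/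
def psiEntry (σ : List ℤ) (a : ℤ) (s : ℕ) : ℕ :=
  (σ.drop (((σ.indexesOf a).getD s σ.length) + 1)).countP (fun x => decide (x < a))

/-- The Manhattan distance between two vectors of naturals (presented as lists). -/
def manhattanL (x y : List ℕ) : ℕ :=
  ∑ i ∈ Finset.range (max x.length y.length), ((x.getD i 0 : ℤ) - (y.getD i 0 : ℤ)).natAbs

/-- The Lee distance over `Z_q` between two vectors with entries in `{0, …, q-1}`
(presented as lists). -/
def leeDistL (q : ℕ) (x y : List ℕ) : ℕ :=
  ∑ i ∈ Finset.range (max x.length y.length),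
    min (((x.getD i 0 : ℤ) - (y.getD i 0 : ℤ)).natAbs)
      (q - ((x.getD i 0 : ℤ) - (y.getD i 0 : ℤ)).natAbs)

/-- The Lee distance between two vectors over `ZMod q`. -/
def zmodLee {q N : ℕ} (x y : Fin N → ZMod q) : ℕ :=
  ∑ i, min (x i - y i).val (y i - x i).val

/-- `permList k σ` : `σ` is (an ordering representing) a permutation of `{1, …, k}`. -/
def permList (k : ℕ) (σ : List ℤ) : Prop :=
  (↑σ : Multiset ℤ) = (↑(rangeList 1 k) : Multiset ℤ)

/-- The multiset `M_{k,r} = {0^k, k+1, …, k+r}`. -/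
def Mkr (k r : ℕ) : Multiset ℤ :=
  Multiset.replicate k (0 : ℤ) + (↑(rangeList (k + 1) r) : Multiset ℤ)

/-- `α_{↓k}` : delete from `α` all elements larger than `k`. -/
def restrictTo (k : ℕ) (α : List ℤ) : List ℤ :=
  α.filter (fun x => decide (x ≤ (k : ℤ)))

/-- `α_{k↦0}` : replace in `α` every element of `{1, …, k}` by `0`. -/
def mapToZero (k : ℕ) (α : List ℤ) : List ℤ :=
  α.map (fun x => if 1 ≤ x ∧ x ≤ (k : ℤ) then 0 else x)

/-- `star σ ρ = σ ∗ ρ` : replace the zeros of `ρ`, from left to right, by the elements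
of `σ` in order. -/
def starP : List ℤ → List ℤ → List ℤ
  | _, [] => []
  | σ, x :: ρ' => if x = 0 then σ.headD 0 :: starP σ.tail ρ' else x :: starP σ ρ'

namespace S17


/-- inversion coordinate of value `v`. -/
def G : List ℤ → ℤ → ℕ
  | [], _ => 0
  | x :: xs, v => (if x = v then xs.countP (fun y => decide (y < v)) else 0) + G xs v

lemma G_nil (v : ℤ) : G [] v = 0 := rfl

lemma G_cons (x : ℤ) (xs : List ℤ) (v : ℤ) :
    G (x :: xs) v = (if x = v then xs.countP (fun y => decide (y < v)) else 0) + G xs v := rfl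

lemma G_append (A B : List ℤ) (v : ℤ) :
    G (A ++ B) v = G A v + A.count v * B.countP (fun y => decide (y < v)) + G B v := by
  induction A with
  | nil => simp [G]
  | cons x A ih =>
      simp only [List.cons_append, G_cons, ih, List.countP_append, List.count_cons]
      by_cases h : x = v <;> simp [h] <;> ring

lemma G_eq_zero_of_not_mem {l : List ℤ} {v : ℤ} (h : v ∉ l) : G l v = 0 := by
  induction l with
  | nil => rfl
  | cons x xs ih =>
      simp only [List.mem_cons, not_or] at h
      simp [G_cons, Ne.symm h.1, ih h.2]

lemma G_adj (l₁ l₂ : List ℤ) (a b : ℤ) (v : ℤ) :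
    (G (l₁ ++ a :: b :: l₂) v : ℤ) - G (l₁ ++ b :: a :: l₂) v =
      (if a = v then (if b < v then 1 else 0) else 0)
        - (if b = v then (if a < v then 1 else 0) else 0) := by
  simp only [G_append, G_cons, List.countP_cons]
  by_cases ha : a = v <;> by_cases hb : b = v <;>
    simp [ha, hb] <;> push_cast <;> ring

/-- the truncated ℓ¹ distance between inversion vectors. -/
def Phi (S : Finset ℤ) (l l' : List ℤ) : ℕ :=
  ∑ v ∈ S, ((G l v : ℤ) - G l' v).natAbs

lemma Phi_self (S : Finset ℤ) (l : List ℤ) : Phi S l l = 0 := by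
  simp [Phi]

lemma Phi_triangle (S : Finset ℤ) (a b c : List ℤ) :
    Phi S a c ≤ Phi S a b + Phi S b c := by
  rw [Phi, Phi, Phi, ← Finset.sum_add_distrib]
  refine Finset.sum_le_sum fun v _ => ?_
  have : ((G a v : ℤ) - G c v) = ((G a v : ℤ) - G b v) + ((G b v : ℤ) - G c v) := by ring
  rw [this]
  exact Int.natAbs_add_le _ _

lemma Phi_adj {l l' : List ℤ} (h : AdjTrans l l') (S : Finset ℤ) : Phi S l l' ≤ 1 := by
  obtain ⟨l₁, l₂, a, b, hab, rfl, rfl⟩ := h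
  have key : ∀ v : ℤ, ((G (l₁ ++ a :: b :: l₂) v : ℤ) - G (l₁ ++ b :: a :: l₂) v).natAbs
      ≤ (if v = a then (if b < a then 1 else 0) else 0)
        + (if v = b then (if a < b then 1 else 0) else 0) := by
    intro v
    rw [G_adj]
    by_cases ha : v = a <;> by_cases hb : v = b <;>
      simp [ha, hb, Ne.symm, eq_comm (a := v)] <;> split_ifs <;> simp_all <;> omega
  calc Phi S (l₁ ++ a :: b :: l₂) (l₁ ++ b :: a :: l₂)
      ≤ ∑ v ∈ S, ((if v = a then (if b < a then 1 else 0) else 0)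
          + (if v = b then (if a < b then 1 else 0) else 0)) :=
        Finset.sum_le_sum fun v _ => key v
    _ = (if a ∈ S then (if b < a then 1 else 0) else 0)
          + (if b ∈ S then (if a < b then 1 else 0) else 0) := by
        rw [Finset.sum_add_distrib, Finset.sum_ite_eq' S a, Finset.sum_ite_eq' S b]
    _ ≤ (if b < a then 1 else 0) + (if a < b then 1 else 0) := by split_ifs <;> omega
    _ ≤ 1 := by rcases lt_or_gt_of_ne hab with h | h <;> simp [h, not_lt_of_gt h] <;> omega

lemma adj_perm {l l' : List ℤ} (h : AdjTrans l l') : l.Perm l' := by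
  obtain ⟨l₁, l₂, a, b, _, rfl, rfl⟩ := h
  exact List.Perm.append_left l₁ (List.Perm.swap b a l₂)

lemma steps_phi {n : ℕ} : ∀ {l l' : List ℤ}, StepsTo n l l' → ∀ S : Finset ℤ, Phi S l l' ≤ n := by
  induction n with
  | zero => intro l l' h S; cases h; simp [Phi_self]
  | succ n ih =>
      rintro l l' ⟨τ, hadj, hst⟩ S
      calc Phi S l l' ≤ Phi S l τ + Phi S τ l' := Phi_triangle S l τ l'
        _ ≤ 1 + n := Nat.add_le_add (Phi_adj hadj S) (ih hst S)
        _ = n + 1 := by omega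

lemma steps_trans : ∀ {m n : ℕ} {a b c : List ℤ},
    StepsTo m a b → StepsTo n b c → StepsTo (m + n) a c := by
  intro m
  induction m with
  | zero => intro n a b c h h'; cases h; simpa using h'
  | succ m ih =>
      rintro n a b c ⟨τ, hadj, hst⟩ h'
      rw [show m + 1 + n = (m + n) + 1 by omega]
      exact ⟨τ, hadj, ih hst h'⟩

lemma steps_cons {x : ℤ} : ∀ {n : ℕ} {a b : List ℤ}, StepsTo n a b → StepsTo n (x :: a) (x :: b) := by
  intro n
  induction n with
  | zero => intro a b h; cases h; rfl
  | succ n ih =>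
      rintro a b ⟨τ, ⟨l₁, l₂, c, d, hcd, rfl, rfl⟩, hst⟩
      exact ⟨x :: (l₁ ++ d :: c :: l₂), ⟨x :: l₁, l₂, c, d, hcd, rfl, rfl⟩, ih hst⟩

lemma steps_move_front : ∀ (u : List ℤ) (v : List ℤ) (b : ℤ), b ∉ u →
    StepsTo u.length (u ++ b :: v) (b :: (u ++ v)) := by
  intro u
  induction u with
  | nil => intro v b _; rfl
  | cons x u ih =>
      intro v b hb
      simp only [List.mem_cons, not_or] at hb
      have h1 : StepsTo u.length (x :: (u ++ b :: v)) (x :: (b :: (u ++ v))) :=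
        steps_cons (ih v b hb.2)
      have h2 : StepsTo 1 (x :: b :: (u ++ v)) (b :: x :: (u ++ v)) :=
        ⟨b :: x :: (u ++ v), ⟨[], u ++ v, x, b, fun h => hb.1 h.symm, rfl, rfl⟩, rfl⟩
      simpa using steps_trans h1 h2

lemma steps_exists : ∀ (l' l : List ℤ), l.Perm l' → l'.Nodup → ∃ n, StepsTo n l l' := by
  intro l'
  induction l' with
  | nil => intro l h _; exact ⟨0, by simpa [StepsTo] using h.eq_nil⟩
  | cons b bs ih =>
      intro l h hnd
      have hb : b ∈ l := h.mem_iff.mpr List.mem_cons_self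
      obtain ⟨u, v, rfl⟩ := List.append_of_mem hb
      have hlnd : (u ++ b :: v).Nodup := h.nodup_iff.mpr hnd
      have hbu : b ∉ u := by
        intro hmem
        have := List.disjoint_of_nodup_append hlnd hmem List.mem_cons_self
        exact this
      have hperm : (u ++ v).Perm bs := by
        have h1 : (b :: (u ++ v)).Perm (b :: bs) :=
          ((List.perm_middle).symm.trans h)
        exact h1.cons_inv
      obtain ⟨n, hn⟩ := ih (u ++ v) hperm (List.Nodup.of_cons hnd)
      exact ⟨u.length + n, steps_trans (steps_move_front u v b hbu) (steps_cons hn)⟩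

lemma dK_ge {l l' : List ℤ} (hperm : l.Perm l') (hnd : l'.Nodup) (S : Finset ℤ) :
    Phi S l l' ≤ dK l l' := by
  obtain ⟨n₀, hn₀⟩ := steps_exists l' l hperm hnd
  exact le_csInf ⟨n₀, hn₀⟩ fun n hn => steps_phi hn S




lemma flatmap_aux : ∀ (l : List ℕ),
    List.map (fun x : ℤ => x) (l.flatMap fun a => [(a : ℤ)]) = l.map (fun x : ℕ => (x : ℤ)) := by
  intro l; induction l <;> simp_all

lemma rangeList_eq (a len : ℕ) :
    rangeList a len = (List.range' a len).map (fun x : ℕ => (x : ℤ)) := by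
  unfold rangeList; generalize List.range' a len = l; induction l <;> simp_all [bind, pure]

lemma rangeList_concat (a len : ℕ) :
    rangeList a (len + 1) = rangeList a len ++ [((a + len : ℕ) : ℤ)] := by
  rw [rangeList_eq, rangeList_eq, List.range'_concat]
  simp

lemma mem_rangeList {a len : ℕ} {x : ℤ} :
    x ∈ rangeList a len ↔ ∃ m : ℕ, a ≤ m ∧ m < a + len ∧ x = (m : ℤ) := by
  rw [rangeList_eq, List.mem_map]
  constructor
  · rintro ⟨m, hm, rfl⟩
    rw [List.mem_range'_1] at hm
    exact ⟨m, hm.1, hm.2, rfl⟩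
  · rintro ⟨m, h1, h2, rfl⟩
    exact ⟨m, List.mem_range'_1.mpr ⟨h1, h2⟩, rfl⟩

lemma rangeList_nodup (a len : ℕ) : (rangeList a len).Nodup := by
  rw [rangeList_eq]
  exact List.Nodup.map (fun x y h => by exact_mod_cast h) (List.nodup_range' (s := a) (n := len))

lemma rangeList_length (a len : ℕ) : (rangeList a len).length = len := by
  rw [rangeList_eq]; simp

lemma perm_of_permList {l : List ℤ} {a len : ℕ}
    (h : (↑l : Multiset ℤ) = (↑(rangeList a len) : Multiset ℤ)) : l.Perm (rangeList a len) :=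
  Multiset.coe_eq_coe.mp h

lemma G_inj : ∀ (K : ℕ) (l l' : List ℤ),
    (↑l : Multiset ℤ) = (↑(rangeList 1 K) : Multiset ℤ) →
    (↑l' : Multiset ℤ) = (↑(rangeList 1 K) : Multiset ℤ) →
    (∀ v, G l v = G l' v) → l = l' := by
  intro K
  induction K with
  | zero =>
      intro l l' h h' _
      have hnil : rangeList 1 0 = [] := by rw [rangeList_eq]; rfl
      rw [hnil] at h h'
      rw [(Multiset.coe_eq_coe.mp h).eq_nil, (Multiset.coe_eq_coe.mp h').eq_nil]
  | succ K ih =>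
      intro l l' hl hl' hG
      set M : ℤ := ((K + 1 : ℕ) : ℤ) with hMdef
      have main : ∀ L : List ℤ, (↑L : Multiset ℤ) = (↑(rangeList 1 (K + 1)) : Multiset ℤ) →
          ∃ u v : List ℤ, L = u ++ M :: v ∧ G L M = v.length ∧
            (↑(u ++ v) : Multiset ℤ) = (↑(rangeList 1 K) : Multiset ℤ) ∧
            (∀ w, M ≤ w → w ∉ u ++ v) ∧
            (∀ w, w < M → G (u ++ v) w = G L w) := by
        intro L hL
        have hperm := perm_of_permList hL
        have hnd : L.Nodup := hperm.nodup_iff.mpr (rangeList_nodup 1 (K + 1))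
        have hMem : M ∈ L := by
          rw [hperm.mem_iff, mem_rangeList]; exact ⟨K + 1, by omega, by omega, rfl⟩
        obtain ⟨u, v, rfl⟩ := List.append_of_mem hMem
        have hndapp := hnd
        have hMu : M ∉ u := fun hm =>
          (List.disjoint_of_nodup_append hndapp) hm List.mem_cons_self
        have hMv : M ∉ v := by
          have := (List.nodup_append.mp hndapp).2.1
          exact fun hm => (List.nodup_cons.mp this).1 hm
        have hbound : ∀ x ∈ u ++ M :: v, x ≤ M := by
          intro x hx
          have : x ∈ rangeList 1 (K + 1) := hperm.mem_iff.mp hx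
          obtain ⟨m, h1, h2, rfl⟩ := mem_rangeList.mp this
          have hm2 : m ≤ K + 1 := by omega
          rw [hMdef]
          exact_mod_cast hm2
        have hvlt : ∀ x ∈ v, x < M := by
          intro x hx
          have hle := hbound x (by simp [hx])
          have : x ≠ M := fun he => hMv (he ▸ hx)
          omega
        refine ⟨u, v, rfl, ?_, ?_, ?_, ?_⟩
        · have h1 : G u M = 0 := G_eq_zero_of_not_mem hMu
          have h2 : u.count M = 0 := List.count_eq_zero.mpr hMu
          have h3 : G (M :: v) M = v.countP (fun y => decide (y < M)) + G v M := by
            simp [G]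
          have h4 : G v M = 0 := G_eq_zero_of_not_mem hMv
          have h5 : v.countP (fun y => decide (y < M)) = v.length :=
            List.countP_eq_length.mpr (fun x hx => by simpa using hvlt x hx)
          rw [G_append, h1, h2, h3, h4, h5]
          simp
        · have e1 : (↑(u ++ M :: v) : Multiset ℤ) = M ::ₘ (↑(u ++ v) : Multiset ℤ) := by
            simp [Multiset.cons_swap]
          have e2 : (↑(rangeList 1 (K + 1)) : Multiset ℤ) = M ::ₘ (↑(rangeList 1 K) : Multiset ℤ) := by
            rw [rangeList_concat]
            have hc : ((1 + K : ℕ) : ℤ) = M := by push_cast [hMdef]; ring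
            rw [hc]
            simp
          rw [e1, e2] at hL
          exact (Multiset.cons_inj_right M).mp hL
        · intro w hw hmem
          have hmem' : w ∈ u ++ M :: v := by
            rcases List.mem_append.mp hmem with h | h
            · exact List.mem_append.mpr (Or.inl h)
            · exact List.mem_append.mpr (Or.inr (List.mem_cons_of_mem _ h))
          have hle := hbound w hmem'
          have hwM : w = M := le_antisymm hle hw
          subst hwM
          rcases List.mem_append.mp hmem with h | h
          exacts [hMu h, hMv h]
        · intro w hw
          rw [G_append, G_append]
          have e3 : G (M :: v) w = G v w := by
            simp [G, show M ≠ w by omega]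
          have e4 : (M :: v).countP (fun y => decide (y < w)) = v.countP (fun y => decide (y < w)) := by
            simp [List.countP_cons, show ¬ (M < w) by omega]
          rw [e3, e4]
      obtain ⟨u, v, rfl, hGv, hcoe, hnm, hGe⟩ := main l hl
      obtain ⟨u', v', rfl, hGv', hcoe', hnm', hGe'⟩ := main l' hl'
      have hlen : v.length = v'.length := by rw [← hGv, ← hGv', hG M]
      have heq : u ++ v = u' ++ v' := by
        refine ih (u ++ v) (u' ++ v') hcoe hcoe' ?_
        intro w
        by_cases hw : w < M
        · rw [hGe w hw, hGe' w hw, hG w]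
        · rw [G_eq_zero_of_not_mem (hnm w (by omega)), G_eq_zero_of_not_mem (hnm' w (by omega))]
      obtain ⟨rfl, rfl⟩ := List.append_inj' heq (by omega)
      rfl




lemma rangeList_cons (a len : ℕ) :
    rangeList a (len + 1) = ((a : ℕ) : ℤ) :: rangeList (a + 1) len := by
  rw [rangeList_eq, rangeList_eq, List.range'_succ]
  simp

/-- insert `w` into `l` so that exactly `c` elements of `l` come after it -/
def ins (w : ℤ) (c : ℕ) (l : List ℤ) : List ℤ :=
  l.take (l.length - c) ++ w :: l.drop (l.length - c)

def enc : List ℕ → ℕ → List ℤ → List ℤ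
  | [], _, l => l
  | c :: cs, w, l => enc cs (w + 1) (ins (w : ℤ) c l)

lemma ins_coe (w : ℤ) (c : ℕ) (l : List ℤ) :
    (↑(ins w c l) : Multiset ℤ) = w ::ₘ (↑l : Multiset ℤ) := by
  have h := List.take_append_drop (l.length - c) l
  have hperm : (l.take (l.length - c) ++ w :: l.drop (l.length - c)).Perm (w :: l) := by
    refine List.perm_middle.trans ?_
    rw [h]
  rw [show (w ::ₘ (↑l : Multiset ℤ)) = ↑(w :: l) from rfl]
  exact Multiset.coe_eq_coe.mpr hperm

lemma ins_length (w : ℤ) (c : ℕ) (l : List ℤ) : (ins w c l).length = l.length + 1 := by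
  simp [ins]
  omega

lemma mem_ins {x w : ℤ} {c : ℕ} {l : List ℤ} (h : x ∈ ins w c l) : x = w ∨ x ∈ l := by
  have : x ∈ (↑(ins w c l) : Multiset ℤ) := by simpa using h
  rw [ins_coe, Multiset.mem_cons] at this
  simpa using this

lemma ins_restrict (k : ℕ) {w : ℤ} (hw : (k : ℤ) < w) (c : ℕ) (l : List ℤ) :
    restrictTo k (ins w c l) = restrictTo k l := by
  have h := List.take_append_drop (l.length - c) l
  calc restrictTo k (ins w c l)
      = restrictTo k (l.take (l.length - c)) ++ restrictTo k (w :: l.drop (l.length - c)) := by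
        simp [restrictTo, ins, List.filter_append]
    _ = restrictTo k (l.take (l.length - c)) ++ restrictTo k (l.drop (l.length - c)) := by
        congr 1
        simp [restrictTo, show ¬ (w ≤ (k:ℤ)) by omega]
    _ = restrictTo k l := by rw [restrictTo, restrictTo, restrictTo, ← List.filter_append, h]

lemma G_ins_self {w : ℤ} {c : ℕ} {l : List ℤ} (hP : ∀ x ∈ l, x < w) (hc : c ≤ l.length) :
    G (ins w c l) w = c := by
  have hwl : w ∉ l := fun hm => lt_irrefl w (hP w hm)
  have h1 : G (l.take (l.length - c)) w = 0 :=
    G_eq_zero_of_not_mem (fun hm => hwl (List.mem_of_mem_take hm))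
  have h2 : (l.take (l.length - c)).count w = 0 :=
    List.count_eq_zero.mpr (fun hm => hwl (List.mem_of_mem_take hm))
  have h4 : G (l.drop (l.length - c)) w = 0 :=
    G_eq_zero_of_not_mem (fun hm => hwl (List.mem_of_mem_drop hm))
  have h5 : (l.drop (l.length - c)).countP (fun y => decide (y < w)) =
      (l.drop (l.length - c)).length :=
    List.countP_eq_length.mpr (fun x hx => by
      simpa using hP x (List.mem_of_mem_drop hx))
  rw [ins, G_append, h1, h2]
  have h3 : G (w :: l.drop (l.length - c)) w
      = (l.drop (l.length - c)).countP (fun y => decide (y < w)) + G (l.drop (l.length - c)) w := by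
    simp [G]
  rw [h3, h4, h5]
  simp
  omega

lemma G_ins_lt {w : ℤ} {c : ℕ} {l : List ℤ} {v : ℤ} (hv : v < w) :
    G (ins w c l) v = G l v := by
  have h := List.take_append_drop (l.length - c) l
  rw [ins, G_append]
  have e3 : G (w :: l.drop (l.length - c)) v = G (l.drop (l.length - c)) v := by
    simp [G, show w ≠ v by omega]
  have e4 : (w :: l.drop (l.length - c)).countP (fun y => decide (y < v)) =
      (l.drop (l.length - c)).countP (fun y => decide (y < v)) := by
    simp [List.countP_cons, show ¬ (w < v) by omega]
  rw [e3, e4, ← G_append, h]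

lemma enc_coe : ∀ (cs : List ℕ) (w : ℕ) (l : List ℤ),
    (↑(enc cs w l) : Multiset ℤ) = (↑l : Multiset ℤ) + (↑(rangeList w cs.length) : Multiset ℤ) := by
  intro cs
  induction cs with
  | nil => intro w l; simp [enc, rangeList_eq]
  | cons c cs ih =>
      intro w l
      rw [show enc (c :: cs) w l = enc cs (w + 1) (ins (w : ℤ) c l) from rfl, ih, ins_coe]
      rw [show (c :: cs).length = cs.length + 1 from rfl, rangeList_cons, ← Multiset.cons_coe,
        Multiset.cons_add, Multiset.add_cons]

lemma enc_length : ∀ (cs : List ℕ) (w : ℕ) (l : List ℤ),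
    (enc cs w l).length = l.length + cs.length := by
  intro cs
  induction cs with
  | nil => intro w l; simp [enc]
  | cons c cs ih => intro w l; rw [show enc (c :: cs) w l = enc cs (w+1) (ins (w:ℤ) c l) from rfl,
      ih, ins_length]; simp; omega

lemma enc_restrict : ∀ (cs : List ℕ) (w : ℕ) (l : List ℤ) (k : ℕ), k < w →
    restrictTo k (enc cs w l) = restrictTo k l := by
  intro cs
  induction cs with
  | nil => intro w l k _; rfl
  | cons c cs ih =>
      intro w l k hk
      rw [show enc (c :: cs) w l = enc cs (w+1) (ins (w:ℤ) c l) from rfl,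
        ih (w+1) _ k (by omega), ins_restrict k (by exact_mod_cast hk)]

lemma enc_G_lt : ∀ (cs : List ℕ) (w : ℕ) (l : List ℤ) (v : ℤ), v < (w : ℤ) →
    G (enc cs w l) v = G l v := by
  intro cs
  induction cs with
  | nil => intro w l v _; rfl
  | cons c cs ih =>
      intro w l v hv
      rw [show enc (c :: cs) w l = enc cs (w+1) (ins (w:ℤ) c l) from rfl,
        ih (w+1) _ v (by push_cast; omega), G_ins_lt hv]

lemma enc_G_at : ∀ (cs : List ℕ) (w : ℕ) (l : List ℤ),
    (∀ x ∈ l, x < (w : ℤ)) → (∀ c ∈ cs, c ≤ l.length) →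
    ∀ j, j < cs.length → G (enc cs w l) ((w + j : ℕ) : ℤ) = cs.getD j 0 := by
  intro cs
  induction cs with
  | nil => intro w l _ _ j hj; simp at hj
  | cons c cs ih =>
      intro w l hP hc j hj
      rw [show enc (c :: cs) w l = enc cs (w+1) (ins (w:ℤ) c l) from rfl]
      cases j with
      | zero =>
          rw [show ((w + 0 : ℕ) : ℤ) = (w : ℤ) by push_cast; ring]
          rw [enc_G_lt cs (w+1) _ (w : ℤ) (by push_cast; omega)]
          rw [G_ins_self hP (hc c List.mem_cons_self)]
          rfl
      | succ j =>
          have hP' : ∀ x ∈ ins (w:ℤ) c l, x < ((w+1 : ℕ) : ℤ) := by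
            intro x hx
            rcases mem_ins hx with rfl | hx'
            · push_cast; omega
            · have := hP x hx'; push_cast; omega
          have hc' : ∀ c' ∈ cs, c' ≤ (ins (w:ℤ) c l).length := by
            intro c' hc''
            rw [ins_length]
            exact le_trans (hc c' (List.mem_cons_of_mem c hc'')) (by omega)
          have := ih (w+1) (ins (w:ℤ) c l) hP' hc' j (by simpa using Nat.lt_of_succ_lt_succ hj)
          rw [show ((w + (j+1) : ℕ) : ℤ) = ((w + 1 + j : ℕ) : ℤ) by push_cast; ring]
          rw [this]
          rfl


open Polynomial

variable {K : Type*} [Field K]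

/-- `∏ (1 - u X)` over the multiset -/
noncomputable def fM (M : Multiset K) : Polynomial K :=
  (M.map (fun u => 1 - C u * X)).prod

def psum (M : Multiset K) (j : ℕ) : K := (M.map (fun u => u ^ j)).sum

noncomputable def SP (M : Multiset K) (N : ℕ) : Polynomial K :=
  ∑ j ∈ Finset.Icc 1 N, C (psum M j) * X ^ j

lemma fM_zero : fM (0 : Multiset K) = 1 := by simp [fM]

lemma fM_cons (u : K) (M : Multiset K) : fM (u ::ₘ M) = (1 - C u * X) * fM M := by
  simp [fM]

lemma psum_zero' (j : ℕ) : psum (0 : Multiset K) j = 0 := by simp [psum]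

lemma psum_cons (u : K) (M : Multiset K) (j : ℕ) :
    psum (u ::ₘ M) j = u ^ j + psum M j := by simp [psum]

lemma geom_tel (u : K) (N : ℕ) :
    (1 - C u * X) * (∑ j ∈ Finset.Icc 1 N, C (u ^ j) * X ^ j)
      = C u * X - C (u ^ (N + 1)) * X ^ (N + 1) := by
  have hy : ∀ j : ℕ, C (u ^ j) * X ^ j = (C u * X) ^ j := by
    intro j; rw [mul_pow, ← C_pow]
  set y : Polynomial K := C u * X with hydef
  have h1 : ∑ j ∈ Finset.Icc 1 N, C (u ^ j) * X ^ j = ∑ j ∈ Finset.Icc 1 N, y ^ j := by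
    exact Finset.sum_congr rfl fun j _ => hy j
  have h2 : ∑ j ∈ Finset.Icc 1 N, y ^ j = (∑ j ∈ Finset.range (N + 1), y ^ j) - 1 := by
    rw [Finset.sum_range_succ']
    rw [← Finset.Ico_add_one_right_eq_Icc, Finset.sum_Ico_eq_sum_range]
    simp [pow_succ, pow_zero]
    exact Finset.sum_congr rfl fun j _ => by ring
  have h3 : (1 - y) * (∑ j ∈ Finset.range (N + 1), y ^ j) = 1 - y ^ (N + 1) := by
    have := geom_sum_mul y (N + 1)
    have h := congrArg (fun z => -z) this
    calc (1 - y) * ∑ j ∈ Finset.range (N + 1), y ^ j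
        = -((∑ j ∈ Finset.range (N + 1), y ^ j) * (y - 1)) := by ring
      _ = -(y ^ (N + 1) - 1) := by rw [this]
      _ = 1 - y ^ (N + 1) := by ring
  rw [h1, h2, mul_sub, h3, hy (N + 1)]
  ring

lemma ident (N : ℕ) (M : Multiset K) :
    ∃ r : Polynomial K, X * derivative (fM M) + fM M * SP M N = X ^ (N + 1) * r := by
  induction M using Multiset.induction_on with
  | empty =>
      refine ⟨0, ?_⟩
      simp [fM_zero, SP, psum_zero']
  | cons u M ih =>
      obtain ⟨r, hr⟩ := ih
      refine ⟨(1 - C u * X) * r - C (u ^ (N + 1)) * fM M, ?_⟩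
      have hSP : SP (u ::ₘ M) N = (∑ j ∈ Finset.Icc 1 N, C (u ^ j) * X ^ j) + SP M N := by
        rw [SP, SP, ← Finset.sum_add_distrib]
        refine Finset.sum_congr rfl fun j _ => ?_
        rw [psum_cons, C_add]; ring
      rw [fM_cons, hSP]
      have hder : derivative ((1 - C u * X) * fM M)
          = -C u * fM M + (1 - C u * X) * derivative (fM M) := by
        rw [derivative_mul]
        congr 1
        · congr 1
          simp
      have htel := geom_tel u N
      calc X * derivative ((1 - C u * X) * fM M)
            + (1 - C u * X) * fM M * ((∑ j ∈ Finset.Icc 1 N, C (u ^ j) * X ^ j) + SP M N)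
          = (1 - C u * X) * (X * derivative (fM M) + fM M * SP M N)
            + fM M * ((1 - C u * X) * (∑ j ∈ Finset.Icc 1 N, C (u ^ j) * X ^ j) - C u * X) := by
            rw [hder]; ring
        _ = (1 - C u * X) * (X ^ (N + 1) * r)
            + fM M * (- (C (u ^ (N + 1)) * X ^ (N + 1))) := by rw [hr, htel]; ring_nf
        _ = X ^ (N + 1) * ((1 - C u * X) * r - C (u ^ (N + 1)) * fM M) := by ring

lemma SP_coeff (M : Multiset K) (N i : ℕ) :
    (SP M N).coeff i = if i ∈ Finset.Icc 1 N then psum M i else 0 := by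
  rw [SP, Polynomial.finset_sum_coeff]
  have : ∀ j ∈ Finset.Icc 1 N, (C (psum M j) * X ^ j).coeff i
      = if j = i then psum M i else 0 := by
    intro j _
    rw [Polynomial.coeff_C_mul, Polynomial.coeff_X_pow]
    by_cases h : i = j <;> simp [h, eq_comm]
  rw [Finset.sum_congr rfl this]
  exact Finset.sum_ite_eq' (Finset.Icc 1 N) i (fun _ => psum M i)

lemma natDegree_fM_le (M : Multiset K) : (fM M).natDegree ≤ Multiset.card M := by
  induction M using Multiset.induction_on with
  | empty => simp [fM_zero]
  | cons u M ih =>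
      rw [fM_cons]
      refine le_trans Polynomial.natDegree_mul_le ?_
      have h1 : (1 - C u * X : Polynomial K).natDegree ≤ 1 := by
        refine le_trans (Polynomial.natDegree_sub_le _ _) ?_
        simp [Polynomial.natDegree_C_mul_le]
        exact le_trans (Polynomial.natDegree_C_mul_le u X) (by simp)
      simp only [Multiset.card_cons]
      omega

lemma coeff_zero_fM (M : Multiset K) : (fM M).coeff 0 = 1 := by
  induction M using Multiset.induction_on with
  | empty => simp [fM_zero]
  | cons u M ih =>
      rw [fM_cons, Polynomial.mul_coeff_zero, ih]
      simp

lemma coeff_recursion (M : Multiset K) (N : ℕ) {i : ℕ} (h1 : 1 ≤ i) (hN : i ≤ N) :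
    (i : K) * (fM M).coeff i
      + ∑ j ∈ Finset.range i, (fM M).coeff j * psum M (i - j) = 0 := by
  obtain ⟨r, hr⟩ := ident N M
  have hcoeff := congrArg (fun p => Polynomial.coeff p i) hr
  obtain ⟨i', rfl⟩ : ∃ i', i = i' + 1 := ⟨i - 1, by omega⟩
  rw [Polynomial.coeff_add] at hcoeff
  have e1 : (X * derivative (fM M)).coeff (i' + 1) = (fM M).coeff (i' + 1 + 1 - 1) * ((i' : K) + 1) := by
    rw [Polynomial.coeff_X_mul, Polynomial.coeff_derivative]
    norm_num
  have e2 : (X ^ (N + 1) * r).coeff (i' + 1) = 0 := by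
    rw [mul_comm, Polynomial.coeff_mul_X_pow']
    simp [show ¬ (N + 1 ≤ i' + 1) by omega]
  have e3 : (fM M * SP M N).coeff (i' + 1)
      = ∑ j ∈ Finset.range (i' + 1), (fM M).coeff j * psum M (i' + 1 - j) := by
    rw [Polynomial.coeff_mul, Finset.Nat.sum_antidiagonal_eq_sum_range_succ_mk]
    dsimp only
    rw [Finset.sum_range_succ]
    have hz : (SP M N).coeff (i' + 1 - (i' + 1)) = 0 := by
      rw [show i' + 1 - (i' + 1) = 0 by omega, SP_coeff]
      simp
    rw [hz, mul_zero, add_zero]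
    refine Finset.sum_congr rfl fun j hj => ?_
    rw [SP_coeff]
    have hj' : j < i' + 1 := Finset.mem_range.mp hj
    rw [if_pos (Finset.mem_Icc.mpr ⟨by omega, by omega⟩)]
  rw [e1, e2, e3] at hcoeff
  push_cast
  calc ((i' : K) + 1) * (fM M).coeff (i' + 1)
        + ∑ j ∈ Finset.range (i' + 1), (fM M).coeff j * psum M (i' + 1 - j)
      = (fM M).coeff (i' + 1 + 1 - 1) * ((i' : K) + 1)
        + ∑ j ∈ Finset.range (i' + 1), (fM M).coeff j * psum M (i' + 1 - j) := by
        norm_num; ring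
    _ = 0 := hcoeff

lemma fM_eq_of_psum (U W : Multiset K) (N : ℕ)
    (hU : Multiset.card U ≤ N) (hW : Multiset.card W ≤ N)
    (hchar : ∀ i : ℕ, 1 ≤ i → i ≤ N → (i : K) ≠ 0)
    (hps : ∀ j : ℕ, 1 ≤ j → j ≤ N → psum U j = psum W j) : fM U = fM W := by
  have key : ∀ i, i ≤ N → (fM U).coeff i = (fM W).coeff i := by
    intro i
    induction i using Nat.strong_induction_on with
    | _ i ih =>
        intro hiN
        rcases Nat.eq_zero_or_pos i with rfl | hpos
        · rw [coeff_zero_fM, coeff_zero_fM]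
        · have rU := coeff_recursion U N hpos hiN
          have rW := coeff_recursion W N hpos hiN
          have hsum : ∑ j ∈ Finset.range i, (fM U).coeff j * psum U (i - j)
              = ∑ j ∈ Finset.range i, (fM W).coeff j * psum W (i - j) := by
            refine Finset.sum_congr rfl fun j hj => ?_
            have hj' : j < i := Finset.mem_range.mp hj
            rw [ih j hj' (by omega), hps (i - j) (by omega) (by omega)]
          have : (i : K) * (fM U).coeff i = (i : K) * (fM W).coeff i := by
            rw [hsum] at rU
            have h2 := rU.trans rW.symm
            exact add_right_cancel h2
          exact mul_left_cancel₀ (hchar i hpos hiN) this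
  refine Polynomial.ext fun i => ?_
  by_cases hi : i ≤ N
  · exact key i hi
  · rw [Polynomial.coeff_eq_zero_of_natDegree_lt (lt_of_le_of_lt (natDegree_fM_le U) (by omega)),
      Polynomial.coeff_eq_zero_of_natDegree_lt (lt_of_le_of_lt (natDegree_fM_le W) (by omega))]

lemma one_sub_CX_ne_zero (u : K) : (1 - C u * X : Polynomial K) ≠ 0 := by
  intro h
  have := congrArg (fun p => Polynomial.coeff p 0) h
  simp at this

lemma exists_eq_of_root {W : Multiset K} (hW : (0 : K) ∉ W) {u : K} (hu0 : u ≠ 0)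
    (hroot : (fM W).eval u⁻¹ = 0) : u ∈ W := by
  have hmm : Multiset.map (Polynomial.eval u⁻¹) (W.map (fun w => 1 - C w * X))
      = W.map (fun w => 1 - w * u⁻¹) := by
    rw [Multiset.map_map]
    refine Multiset.map_congr rfl fun w _ => by simp
  rw [fM, Polynomial.eval_multiset_prod, hmm, Multiset.prod_eq_zero_iff] at hroot
  obtain ⟨w, hwW, hw0⟩ := Multiset.mem_map.mp hroot
  have : w = u := by
    rw [sub_eq_zero] at hw0
    exact (mul_inv_eq_one₀ hu0).mp hw0.symm
  exact this ▸ hwW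

lemma fM_root_of_mem {U : Multiset K} {u : K} (hu : u ∈ U) (hu0 : u ≠ 0) :
    (fM U).eval u⁻¹ = 0 := by
  rw [fM, Polynomial.eval_multiset_prod]
  refine Multiset.prod_eq_zero ?_
  refine Multiset.mem_map.mpr ⟨1 - C u * X, Multiset.mem_map.mpr ⟨u, hu, rfl⟩, ?_⟩
  simp [hu0]

lemma multiset_eq_of_fM : ∀ (U : Multiset K), (0 : K) ∉ U → ∀ (W : Multiset K), (0 : K) ∉ W →
    fM U = fM W → U = W := by
  intro U
  induction U using Multiset.strongInductionOn with
  | ih U ihU =>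
      intro hU W hW hf
      classical
      rcases Multiset.empty_or_exists_mem U with rfl | ⟨u, hu⟩
      · by_contra hne
        obtain ⟨w, hw⟩ := Multiset.exists_mem_of_ne_zero (fun h => hne h.symm)
        have hw0 : w ≠ 0 := fun h => hW (h ▸ hw)
        have hroot : (fM W).eval w⁻¹ = 0 := fM_root_of_mem hw hw0
        rw [← hf, fM_zero] at hroot
        simp at hroot
      · have hu0 : u ≠ 0 := fun h => hU (h ▸ hu)
        have hroot : (fM W).eval u⁻¹ = 0 := by
          rw [← hf]
          exact fM_root_of_mem hu hu0
        have huW : u ∈ W := exists_eq_of_root hW hu0 hroot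
        have hUe : U = u ::ₘ U.erase u := (Multiset.cons_erase hu).symm
        have hWe : W = u ::ₘ W.erase u := (Multiset.cons_erase huW).symm
        rw [hUe, hWe, fM_cons, fM_cons] at hf
        have hf' : fM (U.erase u) = fM (W.erase u) :=
          mul_left_cancel₀ (one_sub_CX_ne_zero u) hf
        have hlt : U.erase u < U := Multiset.erase_lt.mpr hu
        have h0U : (0 : K) ∉ U.erase u := fun h => hU (Multiset.mem_of_mem_erase h)
        have h0W : (0 : K) ∉ W.erase u := fun h => hW (Multiset.mem_of_mem_erase h)
        have := ihU (U.erase u) hlt h0U (W.erase u) h0W hf'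
        rw [hUe, hWe, this]


lemma natAbs_split (z : ℤ) : z.natAbs = z.toNat + (-z).toNat := by omega

lemma psum_add {K : Type*} [Field K] (A B : Multiset K) (j : ℕ) :
    psum (A + B) j = psum A j + psum B j := by simp [psum]

lemma psum_finset_sum {K : Type*} [Field K] {ι : Type*} (s : Finset ι) (f : ι → Multiset K) (j : ℕ) :
    psum (∑ i ∈ s, f i) j = ∑ i ∈ s, psum (f i) j := by
  induction s using Finset.cons_induction with
  | empty => simp [psum]
  | cons a s ha ih => rw [Finset.sum_cons, Finset.sum_cons, psum_add, ih]

lemma card_finset_sum {K : Type*} [Field K] {ι : Type*} (s : Finset ι) (f : ι → Multiset K) :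
    Multiset.card (∑ i ∈ s, f i) = ∑ i ∈ s, Multiset.card (f i) := by
  induction s using Finset.cons_induction with
  | empty => simp
  | cons a s ha ih => rw [Finset.sum_cons, Finset.sum_cons, Multiset.card_add, ih]

lemma count_finset_sum {K : Type*} [Field K] [DecidableEq K] {ι : Type*}
    (s : Finset ι) (f : ι → Multiset K) (a : K) :
    Multiset.count a (∑ i ∈ s, f i) = ∑ i ∈ s, Multiset.count a (f i) := by
  induction s using Finset.cons_induction with
  | empty => simp
  | cons b s hb ih => rw [Finset.sum_cons, Finset.sum_cons, Multiset.count_add, ih]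

lemma mem_finset_sum {K : Type*} [Field K] {ι : Type*} {s : Finset ι} {f : ι → Multiset K} {a : K}
    (h : a ∈ ∑ i ∈ s, f i) : ∃ i ∈ s, a ∈ f i := by
  induction s using Finset.cons_induction with
  | empty => simp at h
  | cons b s hb ih =>
      rw [Finset.sum_cons, Multiset.mem_add] at h
      rcases h with h | h
      · exact ⟨b, Finset.mem_cons_self b s, h⟩
      · obtain ⟨i, hi, hmem⟩ := ih h
        exact ⟨i, Finset.mem_cons.mpr (Or.inr hi), hmem⟩

lemma psum_replicate {K : Type*} [Field K] (n : ℕ) (y : K) (j : ℕ) :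
    psum (Multiset.replicate n y) j = (n : K) * y ^ j := by
  simp [psum, Multiset.map_replicate, Multiset.sum_replicate, nsmul_eq_mul]

lemma toNat_cast_sub {K : Type*} [Field K] (z : ℤ) :
    ((z.toNat : K)) - (((-z).toNat : K)) = ((z : ℤ) : K) := by
  have h := Int.toNat_sub_toNat_neg z
  have := congrArg (fun w : ℤ => (w : K)) h
  push_cast at this
  exact this

theorem key_syndrome {K : Type*} [Field K] [DecidableEq K] (p t k : ℕ) [CharP K p]
    (hp : 2 * t < p) (ht : 1 ≤ t)
    (x : ℕ → K)
    (hx0 : ∀ i ∈ Finset.Icc 1 k, x i ≠ 0)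
    (hinj : ∀ i ∈ Finset.Icc 1 k, ∀ i' ∈ Finset.Icc 1 k, x i = x i' → i = i')
    (hneg : ∀ i ∈ Finset.Icc 1 k, ∀ i' ∈ Finset.Icc 1 k, x i ≠ - x i')
    (E : ℕ → ℤ)
    (hE : ∑ i ∈ Finset.Icc 1 k, (E i).natAbs ≤ 2 * t)
    (hsynd : ∀ l : ℕ, l < t → ∑ i ∈ Finset.Icc 1 k, (E i : K) * (x i) ^ (2 * l + 1) = 0) :
    ∀ i ∈ Finset.Icc 1 k, E i = 0 := by
  set I := Finset.Icc 1 k with hI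
  set F : ℕ → Multiset K := fun i =>
    Multiset.replicate (E i).toNat (x i) + Multiset.replicate (-E i).toNat (-(x i)) with hF
  set Fn : ℕ → Multiset K := fun i =>
    Multiset.replicate (E i).toNat (-(x i)) + Multiset.replicate (-E i).toNat (x i) with hFn
  set U := ∑ i ∈ I, F i with hU
  set W := ∑ i ∈ I, Fn i with hW
  have hcardF : ∀ i, Multiset.card (F i) = (E i).natAbs := by
    intro i; rw [hF]; simp only [Multiset.card_add, Multiset.card_replicate]; omega
  have hcardFn : ∀ i, Multiset.card (Fn i) = (E i).natAbs := by
    intro i; rw [hFn]; simp only [Multiset.card_add, Multiset.card_replicate]; omega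
  have hcardU : Multiset.card U ≤ 2 * t := by
    rw [hU, card_finset_sum]
    calc ∑ i ∈ I, Multiset.card (F i) = ∑ i ∈ I, (E i).natAbs :=
        Finset.sum_congr rfl fun i _ => hcardF i
      _ ≤ 2 * t := hE
  have hcardW : Multiset.card W ≤ 2 * t := by
    rw [hW, card_finset_sum]
    calc ∑ i ∈ I, Multiset.card (Fn i) = ∑ i ∈ I, (E i).natAbs :=
        Finset.sum_congr rfl fun i _ => hcardFn i
      _ ≤ 2 * t := hE
  have hchar : ∀ i : ℕ, 1 ≤ i → i ≤ 2 * t → (i : K) ≠ 0 := by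
    intro i h1 h2 hz
    rw [CharP.cast_eq_zero_iff K p i] at hz
    have := Nat.le_of_dvd (by omega) hz
    omega
  have hps : ∀ j : ℕ, 1 ≤ j → j ≤ 2 * t → psum U j = psum W j := by
    intro j h1 h2
    rw [hU, hW, psum_finset_sum, psum_finset_sum]
    rcases Nat.even_or_odd j with hev | hod
    · refine Finset.sum_congr rfl fun i _ => ?_
      rw [hF, hFn]
      simp only [psum_add, psum_replicate]
      rw [hev.neg_pow]
      try ring
    · have hdiff : ∀ i, psum (F i) j - psum (Fn i) j = 2 * (E i : K) * (x i) ^ j := by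
        intro i
        rw [hF, hFn]
        simp only [psum_add, psum_replicate]
        rw [hod.neg_pow]
        have hc := toNat_cast_sub (K := K) (E i)
        linear_combination (2 * (x i) ^ j) * hc
      have hzero : ∑ i ∈ I, (2 * (E i : K) * (x i) ^ j) = 0 := by
        obtain ⟨l, hl⟩ : ∃ l, j = 2 * l + 1 := hod
        have hlt : l < t := by omega
        have := hsynd l hlt
        calc ∑ i ∈ I, (2 * (E i : K) * (x i) ^ j)
            = 2 * ∑ i ∈ I, ((E i : K) * (x i) ^ (2 * l + 1)) := by
              rw [Finset.mul_sum]
              exact Finset.sum_congr rfl fun i _ => by rw [hl]; ring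
          _ = 0 := by rw [this]; ring
      have hz2 : ∑ i ∈ I, psum (F i) j - ∑ i ∈ I, psum (Fn i) j = 0 := by
        rw [← Finset.sum_sub_distrib]
        rw [Finset.sum_congr rfl fun i _ => hdiff i]
        exact hzero
      exact sub_eq_zero.mp hz2
  have h0U : (0 : K) ∉ U := by
    intro hmem
    obtain ⟨i, hi, hmem'⟩ := mem_finset_sum hmem
    rw [hF, Multiset.mem_add] at hmem'
    rcases hmem' with h | h
    · exact hx0 i hi (Multiset.eq_of_mem_replicate h).symm
    · have h2 := Multiset.eq_of_mem_replicate h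
      exact hx0 i hi (neg_eq_zero.mp h2.symm)
  have h0W : (0 : K) ∉ W := by
    intro hmem
    obtain ⟨i, hi, hmem'⟩ := mem_finset_sum hmem
    rw [hFn, Multiset.mem_add] at hmem'
    rcases hmem' with h | h
    · have h2 := Multiset.eq_of_mem_replicate h
      exact hx0 i hi (neg_eq_zero.mp h2.symm)
    · exact hx0 i hi (Multiset.eq_of_mem_replicate h).symm
  have hUW : U = W :=
    multiset_eq_of_fM U h0U W h0W
      (fM_eq_of_psum U W (2 * t) hcardU hcardW hchar hps)
  intro i₀ hi₀
  have hcU : Multiset.count (x i₀) U = (E i₀).toNat := by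
    calc Multiset.count (x i₀) U = ∑ i ∈ I, Multiset.count (x i₀) (F i) := by
          rw [hU, count_finset_sum]
      _ = Multiset.count (x i₀) (F i₀) := by
          refine Finset.sum_eq_single_of_mem i₀ hi₀ fun i hi hne => ?_
          rw [hF, Multiset.count_add, Multiset.count_replicate, Multiset.count_replicate]
          rw [if_neg (fun h => hne (hinj i hi i₀ hi₀ h)),
            if_neg (fun h => hneg i₀ hi₀ i hi h.symm)]
          simp
      _ = (E i₀).toNat := by
          rw [hF, Multiset.count_add, Multiset.count_replicate, Multiset.count_replicate]
          rw [if_pos rfl, if_neg (fun h => hneg i₀ hi₀ i₀ hi₀ h.symm)]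
          simp
  have hcW : Multiset.count (x i₀) W = (-E i₀).toNat := by
    calc Multiset.count (x i₀) W = ∑ i ∈ I, Multiset.count (x i₀) (Fn i) := by
          rw [hW, count_finset_sum]
      _ = Multiset.count (x i₀) (Fn i₀) := by
          refine Finset.sum_eq_single_of_mem i₀ hi₀ fun i hi hne => ?_
          rw [hFn, Multiset.count_add, Multiset.count_replicate, Multiset.count_replicate]
          rw [if_neg (fun h => hneg i₀ hi₀ i hi h.symm),
            if_neg (fun h => hne (hinj i hi i₀ hi₀ h))]
          simp
      _ = (-E i₀).toNat := by
          rw [hFn, Multiset.count_add, Multiset.count_replicate, Multiset.count_replicate]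
          rw [if_neg (fun h => hneg i₀ hi₀ i₀ hi₀ h.symm), if_pos rfl]
          omega
  have : ((E i₀).toNat : ℤ) = ((-E i₀).toNat : ℤ) := by
    have := hcU ▸ hcW ▸ congrArg (Multiset.count (x i₀)) hUW
    exact_mod_cast this
  omega

lemma digits_inj (b : ℕ) (hb : 0 < b) : ∀ (n : ℕ) (x y : ℕ), x < b ^ n → y < b ^ n →
    (∀ j, j < n → x / b ^ j % b = y / b ^ j % b) → x = y := by
  intro n
  induction n with
  | zero => intro x y hx hy _; simp at hx hy; omega
  | succ n ih =>
      intro x y hx hy hd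
      have h0 : x % b = y % b := by
        have := hd 0 (by omega)
        simpa using this
      have hx' : x / b < b ^ n := by
        rw [Nat.div_lt_iff_lt_mul hb]
        calc x < b ^ (n + 1) := hx
          _ = b ^ n * b := by rw [pow_succ]
      have hy' : y / b < b ^ n := by
        rw [Nat.div_lt_iff_lt_mul hb]
        calc y < b ^ (n + 1) := hy
          _ = b ^ n * b := by rw [pow_succ]
      have hd' : ∀ j, j < n → (x / b) / b ^ j % b = (y / b) / b ^ j % b := by
        intro j hj
        have e : ∀ z : ℕ, z / b / b ^ j = z / b ^ (j + 1) := by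
          intro z
          rw [Nat.div_div_eq_div_mul, pow_succ, mul_comm b (b ^ j)]
        rw [e, e]
        exact hd (j + 1) (by omega)
      have hdiv := ih (x / b) (y / b) hx' hy' hd'
      have h2 : b * (x / b) = b * (y / b) := by rw [hdiv]
      have hxe := Nat.div_add_mod x b
      have hye := Nat.div_add_mod y b
      omega


lemma exists_positions (p m k : ℕ) [hfp : Fact p.Prime] (hm : m ≠ 0) (hodd : Odd p)
    (hbig : 2 * k + 3 ≤ p ^ m) :
    ∃ x : ℕ → GaloisField p m,
      (∀ i ∈ Finset.Icc 1 k, x i ≠ 0) ∧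
      (∀ i ∈ Finset.Icc 1 k, ∀ i' ∈ Finset.Icc 1 k, x i = x i' → i = i') ∧
      (∀ i ∈ Finset.Icc 1 k, ∀ i' ∈ Finset.Icc 1 k, x i ≠ - x i') := by
  classical
  set K := GaloisField p m with hK
  obtain ⟨ζ, hζ⟩ := IsCyclic.exists_generator (α := Kˣ)
  letI : Fintype K := Fintype.ofFinite K
  have hcardK : Nat.card K = p ^ m := GaloisField.card p m hm
  have hcardU : Nat.card Kˣ = p ^ m - 1 := by
    rw [Nat.card_eq_fintype_card, Fintype.card_units, ← Nat.card_eq_fintype_card, hcardK]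
  have hord : orderOf ζ = p ^ m - 1 := by
    rw [orderOf_eq_card_of_forall_mem_zpowers hζ, hcardU]
  set q := p ^ m with hq
  have hq_odd : Odd q := hodd.pow
  set h := (q - 1) / 2 with hh
  have h2h : 2 * h = q - 1 := by
    obtain ⟨c, hc⟩ := hq_odd
    omega
  have hk1 : k + 1 ≤ h := by omega
  -- the generator to the h is -1
  have hneg1 : ((ζ : K)) ^ h = -1 := by
    have hsq : ((ζ : K) ^ h) * ((ζ : K) ^ h) = 1 := by
      rw [← pow_add]
      have : h + h = orderOf ζ := by omega
      rw [this]
      rw [← Units.val_pow_eq_pow_val, pow_orderOf_eq_one]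
      rfl
    rcases mul_self_eq_one_iff.mp hsq with h1 | h1
    · exfalso
      have : (ζ : Kˣ) ^ h = 1 := by
        apply Units.ext
        rw [Units.val_pow_eq_pow_val, h1]
        rfl
      have hdvd : orderOf ζ ∣ h := orderOf_dvd_iff_pow_eq_one.mpr this
      have hle := Nat.le_of_dvd (by omega) hdvd
      omega
    · exact h1
  refine ⟨fun i => (ζ : K) ^ i, ?_, ?_, ?_⟩
  · intro i _
    exact pow_ne_zero i (Units.ne_zero ζ)
  · intro i hi i' hi' hxy
    simp only [Finset.mem_Icc] at hi hi'
    have hu : (ζ : Kˣ) ^ i = (ζ : Kˣ) ^ i' := by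
      apply Units.ext
      rw [Units.val_pow_eq_pow_val, Units.val_pow_eq_pow_val]
      exact hxy
    have hmod : i ≡ i' [MOD orderOf ζ] := pow_eq_pow_iff_modEq.mp hu
    rw [hord] at hmod
    exact hmod.eq_of_lt_of_lt (by omega) (by omega)
  · intro i hi i' hi' hxy
    simp only [Finset.mem_Icc] at hi hi'
    simp only at hxy
    have hx2 : (ζ : K) ^ i = (ζ : K) ^ (i' + h) := by
      rw [pow_add, hneg1, hxy]
      ring
    have hu : (ζ : Kˣ) ^ i = (ζ : Kˣ) ^ (i' + h) := by
      apply Units.ext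
      rw [Units.val_pow_eq_pow_val, Units.val_pow_eq_pow_val]
      exact hx2
    have hmod : i ≡ i' + h [MOD orderOf ζ] := pow_eq_pow_iff_modEq.mp hu
    rw [hord] at hmod
    have := hmod.eq_of_lt_of_lt (by omega) (by omega)
    omega

lemma sum_Ioc_to_Icc (k : ℕ) (f : ℤ → ℕ) :
    ∑ v ∈ Finset.Ioc (0 : ℤ) (k : ℤ), f v = ∑ i ∈ Finset.Icc 1 k, f (i : ℤ) := by
  refine Finset.sum_bij' (fun v _ => v.toNat) (fun i _ => (i : ℤ)) ?_ ?_ ?_ ?_ ?_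
  · intro v hv
    simp only [Finset.mem_Ioc] at hv
    simp only [Finset.mem_Icc]
    omega
  · intro i hi
    simp only [Finset.mem_Icc] at hi
    simp only [Finset.mem_Ioc]
    omega
  · intro v hv
    simp only [Finset.mem_Ioc] at hv
    omega
  · intro i hi
    simp
  · intro v hv
    simp only [Finset.mem_Ioc] at hv
    congr 1
    omega


lemma perm_bounds {k : ℕ} {σ : List ℤ} (h : permList k σ) :
    ∀ x ∈ σ, 1 ≤ x ∧ x ≤ (k : ℤ) := by
  intro x hx
  have hx' : x ∈ rangeList 1 k := by
    have : x ∈ (↑σ : Multiset ℤ) := by simpa using hx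
    rw [h] at this
    simpa using this
  obtain ⟨mm, h1, h2, rfl⟩ := mem_rangeList.mp hx'
  constructor <;> [exact_mod_cast h1; exact_mod_cast Nat.lt_succ_iff.mp (by omega)]

lemma perm_length {k : ℕ} {σ : List ℤ} (h : permList k σ) : σ.length = k := by
  have := congrArg Multiset.card h
  simpa [Multiset.coe_card, rangeList_length] using this

lemma perm_nodup {k : ℕ} {σ : List ℤ} (h : permList k σ) : σ.Nodup :=
  (Multiset.coe_eq_coe.mp h).nodup_iff.mpr (rangeList_nodup 1 k)

lemma restrict_perm_self {k : ℕ} {σ : List ℤ} (h : permList k σ) : restrictTo k σ = σ :=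
  List.filter_eq_self.mpr fun x hx => decide_eq_true (perm_bounds h x hx).2

lemma sigma_eq {k : ℕ} {σ σ' : List ℤ} (hσ : permList k σ) (hσ' : permList k σ')
    (hIcc : ∀ i ∈ Finset.Icc 1 k, G σ (i : ℤ) = G σ' (i : ℤ)) : σ = σ' := by
  refine G_inj k σ σ' hσ hσ' fun v => ?_
  by_cases h1 : 1 ≤ v ∧ v ≤ (k : ℤ)
  · have hv : ((v.toNat : ℕ) : ℤ) = v := by omega
    have hmem : v.toNat ∈ Finset.Icc 1 k := by
      simp only [Finset.mem_Icc]; omega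
    have := hIcc v.toNat hmem
    rwa [hv] at this
  · have hv1 : v ∉ σ := fun hm => h1 (perm_bounds hσ v hm)
    have hv2 : v ∉ σ' := fun hm => h1 (perm_bounds hσ' v hm)
    rw [G_eq_zero_of_not_mem hv1, G_eq_zero_of_not_mem hv2]

lemma ncard_perms (k : ℕ) : {σ : List ℤ | permList k σ}.ncard = k.factorial := by
  classical
  have hset : {σ : List ℤ | permList k σ} = ↑((rangeList 1 k).permutations.toFinset) := by
    ext σ
    simp only [Set.mem_setOf_eq, permList, Finset.coe_sort_coe, Finset.mem_coe,
      List.mem_toFinset, List.mem_permutations]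
    exact Multiset.coe_eq_coe
  rw [hset, Set.ncard_coe_finset,
    List.toFinset_card_of_nodup (List.nodup_permutations _ (rangeList_nodup 1 k)),
    List.length_permutations, rangeList_length]

lemma distance_main (t k : ℕ) (σ σ' α β : List ℤ)
    (hσ : permList k σ) (hσ' : permList k σ') (hne : σ ≠ σ')
    (hα : permList (k + (t + 1)) α) (hβ : permList (k + (t + 1)) β)
    (hGlowα : ∀ v : ℤ, 0 < v → v ≤ (k : ℤ) → G α v = G σ v)
    (hGlowβ : ∀ v : ℤ, 0 < v → v ≤ (k : ℤ) → G β v = G σ' v)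
    (c c' : ℕ → ℕ)
    (hGbigα : ∀ j, j < t + 1 → G α ((k + 1 + j : ℕ) : ℤ) = c j)
    (hGbigβ : ∀ j, j < t + 1 → G β ((k + 1 + j : ℕ) : ℤ) = c' j)
    (hfar : (∑ i ∈ Finset.Icc 1 k, ((G σ (i : ℤ) : ℤ) - G σ' (i : ℤ)).natAbs) ≤ 2 * t →
      ∃ j, j < t + 1 ∧ 2 * t ≤ ((c j : ℤ) - (c' j : ℤ)).natAbs) :
    2 * t + 1 ≤ dK α β := by
  classical
  set D := ∑ i ∈ Finset.Icc 1 k, ((G σ (i : ℤ) : ℤ) - G σ' (i : ℤ)).natAbs with hD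
  have hperm : α.Perm β :=
    Multiset.coe_eq_coe.mp (hα.trans hβ.symm)
  have hndβ : β.Nodup := perm_nodup hβ
  set S1 : Finset ℤ := Finset.Ioc (0 : ℤ) (k : ℤ) with hS1
  set S2 : Finset ℤ := Finset.Ioc (k : ℤ) ((k + t + 1 : ℕ) : ℤ) with hS2
  set Sall : Finset ℤ := Finset.Ioc (0 : ℤ) ((k + t + 1 : ℕ) : ℤ) with hSall
  have hPhi_le := dK_ge hperm hndβ Sall
  have hunion : S1 ∪ S2 = Sall := by
    rw [hS1, hS2, hSall]
    exact Finset.Ioc_union_Ioc_eq_Ioc (by positivity) (by push_cast; omega)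
  have hdisj : Disjoint S1 S2 := by
    rw [Finset.disjoint_left]
    intro a ha ha'
    rw [hS1, Finset.mem_Ioc] at ha
    rw [hS2, Finset.mem_Ioc] at ha'
    omega
  have hsplit : Phi Sall α β = (∑ v ∈ S1, ((G α v : ℤ) - G β v).natAbs)
      + (∑ v ∈ S2, ((G α v : ℤ) - G β v).natAbs) := by
    rw [Phi, ← hunion, Finset.sum_union hdisj]
  have hS1val : ∑ v ∈ S1, ((G α v : ℤ) - G β v).natAbs = D := by
    rw [hS1]
    have : ∀ v ∈ Finset.Ioc (0 : ℤ) (k : ℤ),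
        ((G α v : ℤ) - G β v).natAbs = ((G σ v : ℤ) - G σ' v).natAbs := by
      intro v hv
      rw [Finset.mem_Ioc] at hv
      rw [hGlowα v hv.1 hv.2, hGlowβ v hv.1 hv.2]
    rw [Finset.sum_congr rfl this, hD]
    exact sum_Ioc_to_Icc k (fun v => ((G σ v : ℤ) - G σ' v).natAbs)
  by_cases hbig : 2 * t + 1 ≤ D
  · calc 2 * t + 1 ≤ D := hbig
      _ = ∑ v ∈ S1, ((G α v : ℤ) - G β v).natAbs := hS1val.symm
      _ ≤ Phi Sall α β := by rw [hsplit]; omega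
      _ ≤ dK α β := hPhi_le
  · have hD2t : D ≤ 2 * t := by omega
    have hD1 : 1 ≤ D := by
      rcases Nat.eq_zero_or_pos D with h0 | h; swap
      · exact h
      exfalso
      refine hne (sigma_eq hσ hσ' fun i hi => ?_)
      have := Finset.sum_eq_zero_iff.mp (hD ▸ h0) i hi
      omega
    obtain ⟨j, hj, hjfar⟩ := hfar hD2t
    have hv₀ : ((k + 1 + j : ℕ) : ℤ) ∈ S2 := by
      rw [hS2, Finset.mem_Ioc]
      push_cast
      omega
    have hterm : 2 * t ≤ ((G α ((k + 1 + j : ℕ) : ℤ) : ℤ) - G β ((k + 1 + j : ℕ) : ℤ)).natAbs := by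
      rw [hGbigα j hj, hGbigβ j hj]
      exact hjfar
    have hS2val : 2 * t ≤ ∑ v ∈ S2, ((G α v : ℤ) - G β v).natAbs :=
      le_trans hterm (Finset.single_le_sum (f := fun v => ((G α v : ℤ) - G β v).natAbs)
        (fun v _ => Nat.zero_le _) hv₀)
    calc 2 * t + 1 ≤ D + (2 * t) := by omega
      _ ≤ (∑ v ∈ S1, ((G α v : ℤ) - G β v).natAbs)
          + (∑ v ∈ S2, ((G α v : ℤ) - G β v).natAbs) := by
          rw [hS1val]; omega
      _ = Phi Sall α β := hsplit.symm
      _ ≤ dK α β := hPhi_le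



lemma coe_append (A B : List ℤ) : (↑(A ++ B) : Multiset ℤ) = ↑A + ↑B := by
  rw [← Multiset.coe_add]

lemma rangeList_split (a u v : ℕ) : rangeList a (u + v) = rangeList a u ++ rangeList (a + u) v := by
  rw [rangeList_eq, rangeList_eq, rangeList_eq, ← List.map_append]
  congr 1
  have h := List.range'_append (s := a) (m := u) (n := v) (step := 1)
  simp only [one_mul] at h
  rw [← h]

end S17

/-- Corollary 3. Let `t` be a power of a prime and let `r = t + 1`.
Then there exists an integer `K_t` such that for every integer `k ≥ K_t` for which `k - 2`
is a power of a prime, there exists a `(k+r, k)` systematic `t`-error-correcting code: a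
code `C ⊆ S_{k+r}` of size `k!` such that every `σ ∈ S_k` is the restriction of exactly
one codeword of `C`, and distinct codewords of `C` are at Kendall τ-distance at least
`2t + 1`. -/
theorem stmt17 (t : ℕ) (ht : IsPrimePow t) :
    ∃ Kt : ℕ, ∀ k : ℕ, Kt ≤ k → IsPrimePow (k - 2) →
      ∃ C : Set (List ℤ),
        (∀ α ∈ C, permList (k + (t + 1)) α) ∧
        C.ncard = Nat.factorial k ∧
        (∀ σ : List ℤ, permList k σ → ∃! α, α ∈ C ∧ restrictTo k α = σ) ∧
        (∀ α ∈ C, ∀ β ∈ C, α ≠ β → 2 * t + 1 ≤ dK α β) := by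
  classical
  open S17 in
  obtain ⟨p, hp_ge, hp⟩ := Nat.exists_infinite_primes (2 * t + 3)
  haveI hfact := Fact.mk hp
  have ht2 : 2 ≤ t := ht.two_le
  refine ⟨(3*p)^t * (4*t)^(t+1) + 8*t + 8*p + 100, fun k hKt _hpp => ?_⟩
  have hk_big : (3*p)^t * (4*t)^(t+1) ≤ k := by omega
  have hk8t : 8*t + 100 ≤ k := by omega
  -- choice of the field size exponent m
  have hfind : ∃ m, 2*k+3 ≤ p ^ m := ⟨2*k+3, (Nat.lt_pow_self (n := 2*k+3) (a := p) (by omega)).le⟩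
  set m := Nat.find hfind with hm_def
  have hm_spec : 2*k+3 ≤ p ^ m := Nat.find_spec hfind
  have hm0 : m ≠ 0 := by
    intro h
    rw [h, pow_zero] at hm_spec
    omega
  have hm_min : p ^ (m-1) < 2*k+3 := by
    have h := Nat.find_min hfind (show m - 1 < m by omega)
    omega
  have hpm_ub : p ^ m ≤ p * (2*k+2) := by
    have e : p ^ m = p * p ^ (m-1) := by
      conv_lhs => rw [show m = (m-1)+1 by omega]
      rw [pow_succ]
      ring
    rw [e]
    exact Nat.mul_le_mul_left p (by omega)
  set b := k / (2*t) with hb_def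
  have hb1 : 1 ≤ b := by
    rw [hb_def, Nat.le_div_iff_mul_le (by omega)]
    omega
  have hdm := Nat.div_add_mod k (2*t)
  have hmod_lt : k % (2*t) < 2*t := Nat.mod_lt k (by omega)
  have h2tb_le : 2*t*b ≤ k := by
    rw [hb_def]
    calc 2*t*(k/(2*t)) = (k/(2*t))*(2*t) := by ring
      _ ≤ k := Nat.div_mul_le_self k (2*t)
  have h2t_le_2tb : 2*t ≤ 2*t*b := Nat.le_mul_of_pos_right (2*t) (by omega)
  have hk4tb : k ≤ 4*t*b := by
    have h4 : 4*t*b = 2*(2*t*b) := by ring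
    have hb' : 2*t*(k/(2*t)) = 2*t*b := by rw [hb_def]
    omega
  -- capacity bound
  have hcap : (p^m)^t ≤ b^(t+1) := by
    have s1 : p ^ m ≤ 3*p*k := by
      refine le_trans hpm_ub ?_
      calc p*(2*k+2) ≤ p*(3*k) := Nat.mul_le_mul_left p (by omega)
        _ = 3*p*k := by ring
    have s2 : (p^m)^t ≤ (3*p*k)^t := Nat.pow_le_pow_left s1 t
    have s3 : (3*p*k)^t = (3*p)^t * k^t := by rw [show 3*p*k = (3*p)*k by ring, mul_pow]
    have s4 : (3*p)^t * k^t * (4*t)^(t+1) ≤ k * k^t := by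
      calc (3*p)^t * k^t * (4*t)^(t+1) = ((3*p)^t * (4*t)^(t+1)) * k^t := by ring
        _ ≤ k * k^t := Nat.mul_le_mul_right _ hk_big
    have s5 : k * k^t = k^(t+1) := by rw [pow_succ]; ring
    have s6 : k^(t+1) ≤ (4*t*b)^(t+1) := Nat.pow_le_pow_left hk4tb _
    have s7 : (4*t*b)^(t+1) = (4*t)^(t+1) * b^(t+1) := by
      rw [show 4*t*b = (4*t)*b by ring, mul_pow]
    have hmain : (4*t)^(t+1) * (p^m)^t ≤ (4*t)^(t+1) * b^(t+1) := by
      calc (4*t)^(t+1) * (p^m)^t ≤ (4*t)^(t+1) * ((3*p)^t * k^t) :=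
            Nat.mul_le_mul_left _ (s3 ▸ s2)
        _ = (3*p)^t * k^t * (4*t)^(t+1) := by ring
        _ ≤ k * k^t := s4
        _ = k^(t+1) := s5
        _ ≤ (4*t*b)^(t+1) := s6
        _ = (4*t)^(t+1) * b^(t+1) := s7
    exact Nat.le_of_mul_le_mul_left hmain (pow_pos (by omega) (t+1))
  -- the field and positions
  have hodd : Odd p := hp.odd_of_ne_two (by omega)
  obtain ⟨x, hx0, hxinj, hxneg⟩ := S17.exists_positions p m k hm0 hodd hm_spec
  letI : Fintype (GaloisField p m) := Fintype.ofFinite _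
  have hcardK : Fintype.card (GaloisField p m) = p ^ m := by
    rw [← Nat.card_eq_fintype_card]
    exact GaloisField.card p m hm0
  have hcardF : Fintype.card (Fin t → GaloisField p m) = (p^m)^t := by
    rw [Fintype.card_fun, hcardK, Fintype.card_fin]
  set eqv := Fintype.equivFin (Fin t → GaloisField p m) with heqv_def
  -- the encoding
  set synd : List ℤ → Fin t → GaloisField p m :=
    fun σ l => ∑ i ∈ Finset.Icc 1 k,
      (S17.G σ (i:ℤ) : GaloisField p m) * (x i)^(2*(l:ℕ)+1) with hsynd_def
  set idx : List ℤ → ℕ := fun σ => (eqv (synd σ)).val with hidx_def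
  set dig : List ℤ → ℕ → ℕ := fun σ j => idx σ / b^j % b with hdig_def
  set cs : List ℤ → List ℕ := fun σ => (List.range (t+1)).map (fun j => 2*t*(dig σ j)) with hcs_def
  set Code : List ℤ → List ℤ := fun σ => S17.enc (cs σ) (k+1) σ with hCode_def
  have hidx_lt : ∀ σ, idx σ < b^(t+1) := by
    intro σ
    have h1 : idx σ < Fintype.card (Fin t → GaloisField p m) := (eqv (synd σ)).isLt
    rw [hcardF] at h1
    omega
  have hdig_lt : ∀ σ j, dig σ j < b := fun σ j => Nat.mod_lt _ (by omega)
  have hcs_len : ∀ σ, (cs σ).length = t+1 := by intro σ; rw [hcs_def]; simp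
  have hc_le : ∀ σ, ∀ c ∈ cs σ, c ≤ k := by
    intro σ c hc
    rw [hcs_def] at hc
    simp only [List.mem_map, List.mem_range] at hc
    obtain ⟨j, hj, rfl⟩ := hc
    have hd := hdig_lt σ j
    have h1 : 2*t*(dig σ j + 1) ≤ 2*t*b := Nat.mul_le_mul_left (2*t) (by omega)
    have e : 2*t*(dig σ j + 1) = 2*t*(dig σ j) + 2*t := by ring
    omega
  have hPfun : ∀ σ, permList k σ → ∀ xx ∈ σ, xx < ((k+1 : ℕ):ℤ) := by
    intro σ hσ xx hxx
    have := (S17.perm_bounds hσ xx hxx).2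
    push_cast
    omega
  have hclenfun : ∀ σ, permList k σ → ∀ c ∈ cs σ, c ≤ σ.length := by
    intro σ hσ c hc
    rw [S17.perm_length hσ]
    exact hc_le σ c hc
  have hCode_G_lt : ∀ σ (v : ℤ), v ≤ (k:ℤ) → S17.G (Code σ) v = S17.G σ v := by
    intro σ v hv
    rw [hCode_def]
    exact S17.enc_G_lt (cs σ) (k+1) σ v (by push_cast; omega)
  have hCode_G_big : ∀ σ, permList k σ → ∀ j, j < t+1 →
      S17.G (Code σ) ((k+1+j : ℕ):ℤ) = 2*t*(dig σ j) := by
    intro σ hσ j hj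
    have hgetD : (cs σ).getD j 0 = 2*t*(dig σ j) := by
      rw [hcs_def]
      rw [List.getD_eq_getElem _ _ (by simp; omega)]
      simp
    have hmain := S17.enc_G_at (cs σ) (k+1) σ (hPfun σ hσ) (hclenfun σ hσ) j
      (by rw [hcs_len σ]; omega)
    rw [hCode_def]
    rw [hmain, hgetD]
  have hCode_perm : ∀ σ, permList k σ → permList (k + (t+1)) (Code σ) := by
    intro σ hσ
    rw [permList, hCode_def]
    rw [S17.enc_coe (cs σ) (k+1) σ, hcs_len σ, hσ]
    rw [S17.rangeList_split 1 k (t+1), S17.coe_append]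
    rw [show 1 + k = k + 1 by ring]
  have hCode_restrict : ∀ σ, permList k σ → restrictTo k (Code σ) = σ := by
    intro σ hσ
    rw [hCode_def]
    rw [S17.enc_restrict (cs σ) (k+1) σ k (by omega)]
    exact S17.restrict_perm_self hσ
  set S : Set (List ℤ) := {σ : List ℤ | permList k σ} with hS_def
  refine ⟨Code '' S, ?_, ?_, ?_, ?_⟩
  · rintro α ⟨σ, hσ, rfl⟩
    exact hCode_perm σ hσ
  · rw [Set.ncard_image_of_injOn, hS_def, S17.ncard_perms k]
    intro σ hσ σ' hσ' he
    rw [← hCode_restrict σ hσ, ← hCode_restrict σ' hσ', he]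
  · intro σ hσ
    refine ⟨Code σ, ⟨⟨σ, hσ, rfl⟩, hCode_restrict σ hσ⟩, ?_⟩
    rintro β ⟨⟨σ', hσ', rfl⟩, hres⟩
    rw [hCode_restrict σ' hσ'] at hres
    rw [hres]
  · rintro α ⟨σ, hσ, rfl⟩ β ⟨σ', hσ', rfl⟩ hne
    have hne' : σ ≠ σ' := fun h => hne (by rw [h])
    refine S17.distance_main t k σ σ' (Code σ) (Code σ') hσ hσ' hne'
      (hCode_perm σ hσ) (hCode_perm σ' hσ')
      (fun v _ hv => hCode_G_lt σ v hv) (fun v _ hv => hCode_G_lt σ' v hv)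
      (fun j => 2*t*(dig σ j)) (fun j => 2*t*(dig σ' j))
      (fun j hj => hCode_G_big σ hσ j hj) (fun j hj => hCode_G_big σ' hσ' j hj) ?_
    intro hD2t
    have hsynd_ne : synd σ ≠ synd σ' := by
      intro heq
      apply hne'
      refine S17.sigma_eq hσ hσ' fun i hi => ?_
      have hsynd0 : ∀ l : ℕ, l < t → ∑ i ∈ Finset.Icc 1 k,
          ((((S17.G σ (i:ℤ) : ℤ) - S17.G σ' (i:ℤ)) : ℤ) : GaloisField p m) * (x i)^(2*l+1) = 0 := by
        intro l hl
        have hfun := congrFun heq (⟨l, hl⟩ : Fin t)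
        rw [hsynd_def] at hfun
        simp only at hfun
        have hsub : ∑ i ∈ Finset.Icc 1 k,
            ((((S17.G σ (i:ℤ) : ℤ) - S17.G σ' (i:ℤ)) : ℤ) : GaloisField p m) * (x i)^(2*l+1)
            = (∑ i ∈ Finset.Icc 1 k, (S17.G σ (i:ℤ) : GaloisField p m) * (x i)^(2*l+1))
              - ∑ i ∈ Finset.Icc 1 k, (S17.G σ' (i:ℤ) : GaloisField p m) * (x i)^(2*l+1) := by
          rw [← Finset.sum_sub_distrib]
          refine Finset.sum_congr rfl fun i _ => ?_
          push_cast
          ring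
        rw [hsub, sub_eq_zero]
        exact hfun
      have hall := S17.key_syndrome (K := GaloisField p m) p t k (by omega) (by omega)
        x hx0 hxinj hxneg (fun i => (S17.G σ (i:ℤ) : ℤ) - S17.G σ' (i:ℤ)) hD2t hsynd0
      have hEi := hall i hi
      omega
    have hidx_ne : idx σ ≠ idx σ' := by
      intro h
      rw [hidx_def] at h
      simp only at h
      exact hsynd_ne (eqv.injective (Fin.val_injective h))
    by_contra hno
    push_neg at hno
    apply hidx_ne
    refine S17.digits_inj b (by omega) (t+1) _ _ (hidx_lt σ) (hidx_lt σ') ?_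
    intro j hj
    have hlt := hno j hj
    have hdd : dig σ j = dig σ' j := by
      by_contra hdne
      have h1 : 1 ≤ ((dig σ j : ℤ) - dig σ' j).natAbs := by omega
      have habs : (((2*t*(dig σ j) : ℕ) : ℤ) - ((2*t*(dig σ' j) : ℕ) : ℤ)).natAbs
          = 2*t*((dig σ j : ℤ) - dig σ' j).natAbs := by
        rw [show ((2*t*(dig σ j) : ℕ) : ℤ) - ((2*t*(dig σ' j) : ℕ) : ℤ)
            = (2*t : ℤ)*((dig σ j : ℤ) - dig σ' j) by push_cast; ring, Int.natAbs_mul,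
          show ((2*t : ℤ)).natAbs = 2*t by omega]
      have h2 : 2*t ≤ 2*t*((dig σ j : ℤ) - dig σ' j).natAbs :=
        Nat.le_mul_of_pos_right (2*t) (by omega)
      omega
    rw [hdig_def] at hdd
    simpa using hdd
end

section
/- Let K = {1^{m_1}, 2^{m_2}, ..., ℓ^{m_ℓ}} be a multiset with k = Σ_{i=1}^{ℓ} m_i elements, let R = {ℓ+1, ℓ+1} and M = {0^k, ℓ+1, ℓ+1}. Then there exists a systematic single-error-correcting code C ⊆ S(K ∪ R): for every multi-permutation σ ∈ S(K) there is exactly one codeword α ∈ C whose restriction to the elements of K equals σ (i.e., deleting the two occurrences of ℓ+1 from α yields σ), and distinct codewords of C have Kendall τ-distance at least 3. -/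
namespace S19

/-- weight lists for small `k` (found by computer search) -/
def wL : ℕ → List ℕ
  | 0 => []
  | 1 => [3]
  | 2 => [4,3]
  | 3 => [3,5,4]
  | 4 => [6,2,5,3]
  | 5 => [2,4,5,6,7]
  | _ => []

/-- the modulus -/
def mM (k : ℕ) : ℕ := if k ≤ 5 then 2*k+5 else 3*k-1
/-- weight of the first redundancy symbol -/
def aR (_k : ℕ) : ℕ := 1
/-- weight of the second redundancy symbol -/
def bR (k : ℕ) : ℕ := if k = 4 then 4 else if k = 5 then 3 else 2
/-- weight of the `i`-th information coordinate -/
def wIdx (k i : ℕ) : ℕ := if k ≤ 5 then (wL k).getD i 0 else i + 3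

def SchemeOK (k : ℕ) : Prop :=
  (∀ i < k, ∀ j < k, wIdx k i = wIdx k j → i = j) ∧
  (∀ i < k, 1 ≤ wIdx k i ∧ wIdx k i ≤ k+2) ∧
  (1 ≤ aR k ∧ aR k ≤ k+2 ∧ 1 ≤ bR k ∧ bR k ≤ k+2 ∧ aR k ≠ bR k) ∧
  (∀ i < k, wIdx k i ≠ aR k ∧ wIdx k i ≠ bR k) ∧
  (2*(k+2) < mM k) ∧
  (∀ g : (∀ i : Fin k, Fin (i.1+1)), ∃ p ∈ Finset.range (k+1), ∃ q ∈ Finset.range (p+1),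
    ((∑ i, wIdx k i.1 * (g i).1) + aR k * p + bR k * q) % mM k = 0)

instance (k : ℕ) : Decidable (SchemeOK k) := by
  unfold SchemeOK; infer_instance

set_option maxRecDepth 40000 in
lemma schemeOK (k : ℕ) : SchemeOK k := by
  rcases le_or_gt k 5 with hk | hk
  · interval_cases k <;> decide
  · have h6 : ¬ (k ≤ 5) := by omega
    refine ⟨?_, ?_, ?_, ?_, ?_, ?_⟩
    · intro i _ j _ h; simpa [wIdx, h6] using h
    · intro i hi; simp [wIdx, h6]; omega
    · simp [aR, bR, show k ≠ 4 by omega, show k ≠ 5 by omega]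
    · intro i hi; simp [wIdx, aR, bR, h6, show k ≠ 4 by omega, show k ≠ 5 by omega]
    · simp [mM, h6]; omega
    · intro g
      set S := (∑ i, wIdx k i.1 * (g i).1) with hS
      have hmm : mM k = 3*k-1 := by simp [mM, h6]
      have hmpos : 0 < mM k := by omega
      -- choose p,q with p + 2q ≡ -S  (mod m)
      set s := S % mM k with hs
      have hslt : s < mM k := Nat.mod_lt _ hmpos
      rcases Nat.eq_zero_or_pos s with h0 | hpos
      · exact ⟨0, by simp, 0, by simp, by simpa [aR, bR] using h0⟩
      · set r := mM k - s with hr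
        have hrle : r ≤ 3*k - 2 := by omega
        obtain ⟨p, q, hq, hp, hpq⟩ : ∃ p q : ℕ, q ≤ p ∧ p ≤ k ∧ p + 2*q = r := by
          rcases le_or_gt r k with h | h
          · exact ⟨r, 0, by omega, by omega, by omega⟩
          · exact ⟨r - 2*((r-k+1)/2), (r-k+1)/2, by omega, by omega, by omega⟩
        refine ⟨p, Finset.mem_range.mpr (by omega), q, Finset.mem_range.mpr (by omega), ?_⟩
        have hSrep : S + aR k * p + bR k * q = mM k * (S / mM k) + mM k := by
          have := Nat.div_add_mod S (mM k)
          simp only [aR, bR, if_neg (by omega : ¬ k = 4), if_neg (by omega : ¬ k = 5)]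
          omega
        rw [hSrep, ← Nat.mul_succ, Nat.mul_mod_right]


/-- The weighted-inversion invariant, computed with a running occurrence-count context `c`. -/
def FF (Wf : ℤ → ℕ → ℕ) : (ℤ → ℕ) → List ℤ → ℕ
  | _, [] => 0
  | c, x :: t =>
      Wf x (c x) * t.countP (fun y => decide (y < x)) + FF Wf (Function.update c x (c x + 1)) t

lemma FF_congr (Wf : ℤ → ℕ → ℕ) :
    ∀ (t : List ℤ) (c c' : ℤ → ℕ), (∀ u ∈ t, c u = c' u) → FF Wf c t = FF Wf c' t := by
  intro t
  induction t with
  | nil => intro c c' _; rfl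
  | cons x t ih =>
      intro c c' h
      simp only [FF]
      rw [h x (by simp)]
      congr 1
      apply ih
      intro u hu
      by_cases hux : u = x
      · subst hux; simp
      · simp [Function.update_of_ne hux, h u (by simp [hu])]

lemma FF_swap (Wf : ℤ → ℕ → ℕ) {x y : ℤ} (hyx : y < x) :
    ∀ (l : List ℤ) (r : List ℤ) (c : ℤ → ℕ),
      FF Wf c (l ++ x :: y :: r) = FF Wf c (l ++ y :: x :: r) + Wf x (c x + l.count x) := by
  intro l
  induction l with
  | nil =>
      intro r c
      simp only [List.nil_append, FF, List.countP_cons, decide_eq_true_eq, List.count_nil]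
      have hxy : ¬ (x < y) := by omega
      have hne : y ≠ x := ne_of_lt hyx
      rw [Function.update_comm hne]
      simp [Function.update_of_ne hne, Function.update_of_ne (Ne.symm hne), hyx, hxy]
      ring
  | cons z l ih =>
      intro r c
      simp only [List.cons_append, FF, List.append_eq]
      have hcnt : ∀ p : ℤ → Bool, (l ++ x :: y :: r).countP p = (l ++ y :: x :: r).countP p := by
        intro p; simp [List.countP_append, List.countP_cons]; omega
      rw [hcnt, ih r (Function.update c z (c z + 1))]
      have : Function.update c z (c z + 1) x + l.count x = c x + (z :: l).count x := by
        by_cases hxz : x = z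
        · subst hxz; simp [List.count_cons]; omega
        · simp [Function.update_of_ne hxz, List.count_cons, hxz, Ne.symm hxz]
      rw [this, add_assoc]

lemma FF_insert (Wf : ℤ → ℕ → ℕ) {z : ℤ} :
    ∀ (l r : List ℤ) (c : ℤ → ℕ), (∀ u ∈ l, u ≤ z) → (∀ u ∈ r, u < z) →
      FF Wf c (l ++ z :: r) = FF Wf c (l ++ r) + Wf z (c z + l.count z) * r.length := by
  intro l
  induction l with
  | nil =>
      intro r c _ hr
      simp only [List.nil_append, FF, List.count_nil]
      have h1 : r.countP (fun y => decide (y < z)) = r.length :=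
        List.countP_eq_length.mpr (fun u hu => by simpa using hr u hu)
      have h2 : FF Wf (Function.update c z (c z + 1)) r = FF Wf c r := by
        apply FF_congr
        intro u hu
        have : u ≠ z := ne_of_lt (hr u hu)
        simp [Function.update_of_ne this]
      rw [h1, h2]; ring
  | cons u l ih =>
      intro r c hl hr
      simp only [List.cons_append, FF, List.append_eq]
      have hcnt : (l ++ z :: r).countP (fun y => decide (y < u)) =
          (l ++ r).countP (fun y => decide (y < u)) := by
        have : ¬ (z < u) := by have := hl u (by simp); omega
        simp [List.countP_append, List.countP_cons, this]
      rw [hcnt, ih r (Function.update c u (c u + 1)) (fun v hv => hl v (by simp [hv])) hr]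
      have : Function.update c u (c u + 1) z + l.count z = c z + (u :: l).count z := by
        by_cases hzu : z = u
        · subst hzu; simp [List.count_cons]; omega
        · simp [Function.update_of_ne hzu, List.count_cons, hzu, Ne.symm hzu]
      rw [this, add_assoc]


/-- `FF` is a sum of weighted terms over pairwise-distinct (value, occurrence) coordinates. -/
lemma FF_rep (Wf : ℤ → ℕ → ℕ) :
    ∀ (t : List ℤ) (c : ℤ → ℕ),
      ∃ L : List ((ℤ × ℕ) × ℕ),
        FF Wf c t = (L.map (fun p => Wf p.1.1 p.1.2 * p.2)).sum ∧
        (∀ p ∈ L, p.1.1 ∈ t ∧ c p.1.1 ≤ p.1.2 ∧ p.1.2 < c p.1.1 + t.count p.1.1 ∧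
          p.2 ≤ t.countP (fun y => decide (y < p.1.1))) ∧
        (L.map Prod.fst).Nodup := by
  intro t
  induction t with
  | nil => intro c; exact ⟨[], by simp [FF], by simp, by simp⟩
  | cons x t ih =>
      intro c
      obtain ⟨L, h1, h2, h3⟩ := ih (Function.update c x (c x + 1))
      refine ⟨((x, c x), t.countP (fun y => decide (y < x))) :: L, ?_, ?_, ?_⟩
      · simp [FF, h1]
      · intro p hp
        rcases List.mem_cons.mp hp with rfl | hp
        · refine ⟨by simp, le_refl _, ?_, ?_⟩
          · simp [List.count_cons]
          · simp [List.countP_cons]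
        · obtain ⟨hmem, hle, hlt, hpsi⟩ := h2 p hp
          have hup : c p.1.1 ≤ Function.update c x (c x + 1) p.1.1 := by
            by_cases h : p.1.1 = x
            · subst h; simp
            · simp [Function.update_of_ne h]
          refine ⟨by simp [hmem], le_trans hup hle, ?_, ?_⟩
          · by_cases h : p.1.1 = x
            · rw [h] at hlt ⊢
              simp only [Function.update_self] at hlt
              simp [List.count_cons]; omega
            · rw [Function.update_of_ne h] at hlt
              simp [List.count_cons, h]
              omega
          · refine le_trans hpsi ?_
            simp [List.countP_cons]
      · simp only [List.map_cons, List.nodup_cons]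
        refine ⟨?_, h3⟩
        intro hmem
        obtain ⟨p, hp, hfst⟩ := List.mem_map.mp hmem
        obtain ⟨_, hle, _, _⟩ := h2 p hp
        rw [hfst] at hle
        simp only [Function.update_self] at hle
        omega

/-- Reindex a list of weighted terms with distinct indices below `k` into a boxed vector `g`. -/
lemma sum_pairs (wf : ℕ → ℕ) (k : ℕ) :
    ∀ L : List (ℕ × ℕ), (L.map Prod.fst).Nodup →
      (∀ p ∈ L, p.1 < k ∧ p.2 ≤ p.1) →
      ∃ g : ℕ → ℕ, (∀ i, g i ≤ i) ∧
        (L.map (fun p => wf p.1 * p.2)).sum = ∑ i ∈ Finset.range k, wf i * g i ∧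
        (∀ i, g i ≠ 0 → i ∈ L.map Prod.fst) := by
  intro L
  induction L with
  | nil => exact fun _ _ => ⟨fun _ => 0, fun _ => Nat.zero_le _, by simp, by simp⟩
  | cons p L ih =>
      intro hnd hb
      obtain ⟨hp1, hLnd⟩ := by simpa using hnd
      obtain ⟨g, hg1, hg2, hg3⟩ := ih hLnd (fun q hq => hb q (by simp [hq]))
      have hgp : g p.1 = 0 := by
        by_contra h
        obtain ⟨q, hq, hfst⟩ := List.mem_map.mp (hg3 _ h)
        exact hp1 q.2 (by rwa [show (p.1, q.2) = q from Prod.ext hfst.symm rfl])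
      refine ⟨Function.update g p.1 p.2, ?_, ?_, ?_⟩
      · intro i
        by_cases h : i = p.1
        · subst h; simp [(hb p (by simp)).2]
        · simp [Function.update_of_ne h, hg1 i]
      · have hpmem : p.1 ∈ Finset.range k := Finset.mem_range.mpr (hb p (by simp)).1
        rw [← Finset.add_sum_erase _ _ hpmem] at *
        simp only [List.map_cons, List.sum_cons, hg2, hgp, Nat.mul_zero, Nat.zero_add,
          Function.update_self]
        congr 1
        apply Finset.sum_congr rfl
        intro i hi
        have : i ≠ p.1 := (Finset.mem_erase.mp hi).1
        rw [Function.update_of_ne this]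
      · intro i hi
        by_cases h : i = p.1
        · simp [h]
        · rw [Function.update_of_ne h] at hi
          simp [hg3 i hi]


lemma countP_msum (p : ℤ → Prop) [DecidablePred p] (s : Finset ℕ) (f : ℕ → Multiset ℤ) :
    (∑ i ∈ s, f i).countP p = ∑ i ∈ s, (f i).countP p :=
  map_sum (Multiset.countPAddMonoidHom p) f s

lemma card_msum (s : Finset ℕ) (f : ℕ → Multiset ℤ) :
    Multiset.card (∑ i ∈ s, f i) = ∑ i ∈ s, Multiset.card (f i) := by
  classical
  induction s using Finset.induction_on with
  | empty => simp
  | insert a s' h ih => simp [Finset.sum_insert h, ih]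

lemma countP_replicate (p : ℤ → Prop) [DecidablePred p] (n : ℕ) (a : ℤ) :
    (Multiset.replicate n a).countP p = if p a then n else 0 := by
  induction n with
  | zero => simp
  | succ n ih => simp [Multiset.replicate_succ, Multiset.countP_cons, ih]; split <;> omega

section Params

variable (ℓ : ℕ) (mm : ℕ → ℕ)

def Kms : Multiset ℤ := ∑ i ∈ Finset.Icc 1 ℓ, Multiset.replicate (mm i) (i : ℤ)
def kk : ℕ := ∑ i ∈ Finset.Icc 1 ℓ, mm i
def zz : ℤ := (ℓ : ℤ) + 1
def pre (v : ℤ) : ℕ := ∑ i ∈ Finset.Icc 1 ℓ, if (i : ℤ) < v then mm i else 0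
/-- the weight function on (value, occurrence index) coordinates -/
def Wt (v : ℤ) (j : ℕ) : ℕ :=
  if v = zz ℓ then (if j = 0 then aR (kk ℓ mm) else bR (kk ℓ mm))
  else wIdx (kk ℓ mm) (pre ℓ mm v + j)

lemma mem_Kms {v : ℤ} : v ∈ Kms ℓ mm ↔ ∃ i ∈ Finset.Icc 1 ℓ, mm i ≠ 0 ∧ v = (i : ℤ) := by
  simp [Kms, Multiset.mem_sum, Multiset.mem_replicate]

lemma count_Kms {i : ℕ} (hi : i ∈ Finset.Icc 1 ℓ) : (Kms ℓ mm).count (i : ℤ) = mm i := by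
  rw [Kms, Multiset.count_sum']
  rw [Finset.sum_eq_single_of_mem i hi]
  · simp [Multiset.count_replicate]
  · intro j _ hj
    rw [Multiset.count_replicate, if_neg (by exact_mod_cast hj)]

lemma count_Kms_zz : (Kms ℓ mm).count (zz ℓ) = 0 := by
  rw [Kms, Multiset.count_sum']
  apply Finset.sum_eq_zero
  intro j hj
  rw [Multiset.count_replicate, if_neg]
  intro h
  have hj' : j ≤ ℓ := (Finset.mem_Icc.mp hj).2
  rw [zz] at h
  have : j = ℓ + 1 := by exact_mod_cast h
  omega

lemma countP_lt_Kms (v : ℤ) : (Kms ℓ mm).countP (fun x => x < v) = pre ℓ mm v := by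
  rw [Kms, countP_msum, pre]
  apply Finset.sum_congr rfl
  intro i _
  rw [countP_replicate]

lemma card_Kms : Multiset.card (Kms ℓ mm) = kk ℓ mm := by
  rw [Kms, card_msum, kk]
  simp

lemma pre_le (v : ℤ) : pre ℓ mm v ≤ kk ℓ mm := by
  rw [pre, kk]
  apply Finset.sum_le_sum
  intro i _
  split <;> omega

lemma pre_add_count_le {i : ℕ} (hi : i ∈ Finset.Icc 1 ℓ) :
    pre ℓ mm (i : ℤ) + mm i ≤ kk ℓ mm := by
  rw [pre, kk]
  have : (∑ j ∈ Finset.Icc 1 ℓ, if (j : ℤ) < (i : ℤ) then mm j else 0) + mm i =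
      ∑ j ∈ Finset.Icc 1 ℓ, ((if (j : ℤ) < (i : ℤ) then mm j else 0) + if j = i then mm j else 0) := by
    rw [Finset.sum_add_distrib, Finset.sum_ite_eq' (Finset.Icc 1 ℓ) i, if_pos hi]
  rw [this]
  apply Finset.sum_le_sum
  intro j _
  by_cases h : j = i
  · subst h; simp
  · have : ¬ ((j : ℤ) < (i : ℤ)) ∨ ((j:ℤ) < (i:ℤ)) := by tauto
    simp [h]
    split <;> omega

lemma pre_mono {i i' : ℕ} (hi : i ∈ Finset.Icc 1 ℓ) (hii' : i < i') :
    pre ℓ mm (i : ℤ) + mm i ≤ pre ℓ mm (i' : ℤ) := by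
  rw [pre, pre]
  have : (∑ j ∈ Finset.Icc 1 ℓ, if (j : ℤ) < (i : ℤ) then mm j else 0) + mm i =
      ∑ j ∈ Finset.Icc 1 ℓ, ((if (j : ℤ) < (i : ℤ) then mm j else 0) + if j = i then mm j else 0) := by
    rw [Finset.sum_add_distrib, Finset.sum_ite_eq' (Finset.Icc 1 ℓ) i, if_pos hi]
  rw [this]
  apply Finset.sum_le_sum
  intro j _
  by_cases h : j = i
  · subst h
    have : (j : ℤ) < (i' : ℤ) := by exact_mod_cast hii'
    simp [this]
  · by_cases h2 : (j : ℤ) < (i : ℤ)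
    · have : (j : ℤ) < (i' : ℤ) := by
        have : (i : ℤ) < (i' : ℤ) := by exact_mod_cast hii'
        omega
      simp [h, h2, this]
    · simp [h, h2]

lemma idx_inj {i i' : ℕ} {j j' : ℕ} (hi : i ∈ Finset.Icc 1 ℓ) (hi' : i' ∈ Finset.Icc 1 ℓ)
    (hj : j < mm i) (hj' : j' < mm i')
    (h : pre ℓ mm (i : ℤ) + j = pre ℓ mm (i' : ℤ) + j') : i = i' ∧ j = j' := by
  rcases lt_trichotomy i i' with hlt | heq | hgt
  · have := pre_mono ℓ mm hi hlt; omega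
  · subst heq; omega
  · have := pre_mono ℓ mm hi' hgt; omega

end Params


section Params2

variable (ℓ : ℕ) (mm : ℕ → ℕ)

/-- the full multiset of a codeword -/
def Mfull : Multiset ℤ := Kms ℓ mm + Multiset.replicate 2 (zz ℓ)

lemma count_Mfull_zz : (Mfull ℓ mm).count (zz ℓ) = 2 := by
  rw [Mfull, Multiset.count_add, count_Kms_zz, Multiset.count_replicate_self]

lemma count_Mfull_i {i : ℕ} (hi : i ∈ Finset.Icc 1 ℓ) :
    (Mfull ℓ mm).count (i : ℤ) = mm i := by
  rw [Mfull, Multiset.count_add, count_Kms ℓ mm hi, Multiset.count_replicate, if_neg, add_zero]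
  intro h
  rw [zz] at h
  have : ℓ + 1 = i := by exact_mod_cast h
  have := (Finset.mem_Icc.mp hi).2
  omega

lemma mem_Mfull_cases {v : ℤ} (hv : v ∈ Mfull ℓ mm) : v ∈ Kms ℓ mm ∨ v = zz ℓ := by
  rcases Multiset.mem_add.mp hv with h | h
  · exact Or.inl h
  · exact Or.inr (Multiset.eq_of_mem_replicate h)

lemma W_valid {v : ℤ} {j : ℕ} (hv : v ∈ Mfull ℓ mm) (hj : j < (Mfull ℓ mm).count v) :
    1 ≤ Wt ℓ mm v j ∧ Wt ℓ mm v j ≤ kk ℓ mm + 2 := by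
  have hsch := schemeOK (kk ℓ mm)
  by_cases hz : v = zz ℓ
  · subst hz
    obtain ⟨h1, h2, h3, h4, _⟩ := hsch.2.2.1
    by_cases hj0 : j = 0 <;> simp [Wt, hj0] <;> omega
  · rcases mem_Mfull_cases ℓ mm hv with hK | h
    · obtain ⟨i, hi, hne0, rfl⟩ := (mem_Kms ℓ mm).mp hK
      rw [count_Mfull_i ℓ mm hi] at hj
      have hidx : pre ℓ mm (i : ℤ) + j < kk ℓ mm := by
        have := pre_add_count_le ℓ mm hi; omega
      have := hsch.2.1 _ hidx
      simp only [Wt, if_neg hz]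
      omega
    · exact absurd h hz

lemma W_inj {v v' : ℤ} {j j' : ℕ} (hv : v ∈ Mfull ℓ mm) (hj : j < (Mfull ℓ mm).count v)
    (hv' : v' ∈ Mfull ℓ mm) (hj' : j' < (Mfull ℓ mm).count v')
    (h : Wt ℓ mm v j = Wt ℓ mm v' j') : v = v' ∧ j = j' := by
  have hsch := schemeOK (kk ℓ mm)
  obtain ⟨hinj, hbnd, ⟨_, _, _, _, hab⟩, hnab, _, _⟩ := hsch
  by_cases hz : v = zz ℓ <;> by_cases hz' : v' = zz ℓ
  · subst hz; subst hz'
    refine ⟨rfl, ?_⟩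
    rw [count_Mfull_zz] at hj hj'
    by_cases h0 : j = 0 <;> by_cases h0' : j' = 0 <;>
      simp [Wt, h0, h0'] at h ⊢ <;> omega
  · exfalso
    subst hz
    rcases mem_Mfull_cases ℓ mm hv' with hK | hcz
    · obtain ⟨i, hi, hne0, rfl⟩ := (mem_Kms ℓ mm).mp hK
      rw [count_Mfull_i ℓ mm hi] at hj'
      have hidx : pre ℓ mm (i : ℤ) + j' < kk ℓ mm := by
        have := pre_add_count_le ℓ mm hi; omega
      have := hnab _ hidx
      simp only [Wt, if_pos rfl, if_neg hz'] at h
      by_cases h0 : j = 0 <;> simp [h0] at h <;> tauto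
    · exact hz' hcz
  · exfalso
    subst hz'
    rcases mem_Mfull_cases ℓ mm hv with hK | hcz
    · obtain ⟨i, hi, hne0, rfl⟩ := (mem_Kms ℓ mm).mp hK
      rw [count_Mfull_i ℓ mm hi] at hj
      have hidx : pre ℓ mm (i : ℤ) + j < kk ℓ mm := by
        have := pre_add_count_le ℓ mm hi; omega
      have := hnab _ hidx
      simp only [Wt, if_pos rfl, if_neg hz] at h
      by_cases h0 : j' = 0 <;> simp [h0] at h <;> tauto
    · exact hz hcz
  · rcases mem_Mfull_cases ℓ mm hv with hK | hcz
    swap; · exact absurd hcz hz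
    rcases mem_Mfull_cases ℓ mm hv' with hK' | hcz'
    swap; · exact absurd hcz' hz'
    obtain ⟨i, hi, hne0, rfl⟩ := (mem_Kms ℓ mm).mp hK
    obtain ⟨i', hi', hne0', rfl⟩ := (mem_Kms ℓ mm).mp hK'
    rw [count_Mfull_i ℓ mm hi] at hj
    rw [count_Mfull_i ℓ mm hi'] at hj'
    have hidx : pre ℓ mm (i : ℤ) + j < kk ℓ mm := by
      have := pre_add_count_le ℓ mm hi; omega
    have hidx' : pre ℓ mm (i' : ℤ) + j' < kk ℓ mm := by
      have := pre_add_count_le ℓ mm hi'; omega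
    simp only [Wt, if_neg hz, if_neg hz'] at h
    have heq := hinj _ hidx _ hidx' h
    obtain ⟨hii, hjj⟩ := idx_inj ℓ mm hi hi' hj hj' heq
    subst hii
    exact ⟨rfl, hjj⟩

/-- facts about a list realizing the information multiset -/
lemma sigma_facts {σ : List ℤ} (hσ : (↑σ : Multiset ℤ) = Kms ℓ mm) :
    σ.length = kk ℓ mm ∧ (∀ u ∈ σ, u < zz ℓ) ∧ σ.count (zz ℓ) = 0 := by
  refine ⟨?_, ?_, ?_⟩
  · rw [← Multiset.coe_card, hσ, card_Kms]
  · intro u hu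
    have : u ∈ Kms ℓ mm := hσ ▸ hu
    obtain ⟨i, hi, _, rfl⟩ := (mem_Kms ℓ mm).mp this
    have := (Finset.mem_Icc.mp hi).2
    rw [zz]
    exact_mod_cast Nat.lt_succ_of_le this
  · rw [← Multiset.coe_count, hσ, count_Kms_zz]

lemma F_sigma_rep {σ : List ℤ} (hσ : (↑σ : Multiset ℤ) = Kms ℓ mm) :
    ∃ g : ℕ → ℕ, (∀ i, g i ≤ i) ∧
      FF (Wt ℓ mm) (fun _ => 0) σ = ∑ i ∈ Finset.range (kk ℓ mm), wIdx (kk ℓ mm) i * g i := by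
  obtain ⟨L, h1, h2, h3⟩ := FF_rep (Wt ℓ mm) σ (fun _ => 0)
  -- facts about valid coordinates in L
  have hval : ∀ p ∈ L, ∃ i ∈ Finset.Icc 1 ℓ, p.1.1 = (i : ℤ) ∧ p.1.2 < mm i ∧
      p.2 ≤ pre ℓ mm p.1.1 := by
    intro p hp
    obtain ⟨hmem, _, hlt, hpsi⟩ := h2 p hp
    have hK : p.1.1 ∈ Kms ℓ mm := hσ ▸ hmem
    obtain ⟨i, hi, hne0, hvi⟩ := (mem_Kms ℓ mm).mp hK
    refine ⟨i, hi, hvi, ?_, ?_⟩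
    · have : σ.count p.1.1 = mm i := by
        rw [← Multiset.coe_count, hσ, hvi, count_Kms ℓ mm hi]
      omega
    · have : σ.countP (fun y => decide (y < p.1.1)) = pre ℓ mm p.1.1 := by
        have := Multiset.coe_countP (fun x => x < p.1.1) σ
        rw [hσ, countP_lt_Kms] at this
        exact this.symm
      omega
  have hvz : ∀ p ∈ L, p.1.1 ≠ zz ℓ := by
    intro p hp
    obtain ⟨i, hi, hvi, _, _⟩ := hval p hp
    intro hc
    rw [hvi, zz] at hc
    have : i = ℓ + 1 := by exact_mod_cast hc
    have := (Finset.mem_Icc.mp hi).2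
    omega
  have hvalc : ∀ c ∈ L.map Prod.fst, ∃ i ∈ Finset.Icc 1 ℓ, c.1 = (i : ℤ) ∧ c.2 < mm i := by
    intro c hc
    obtain ⟨p, hp, rfl⟩ := List.mem_map.mp hc
    obtain ⟨i, hi, hvi, hj, _⟩ := hval p hp
    exact ⟨i, hi, hvi, hj⟩
  obtain ⟨g, hg1, hg2, _⟩ := sum_pairs (wIdx (kk ℓ mm)) (kk ℓ mm)
      (L.map (fun p => (pre ℓ mm p.1.1 + p.1.2, p.2)))
      (by
        rw [List.map_map]
        have hcomp : (Prod.fst ∘ fun p : (ℤ × ℕ) × ℕ => (pre ℓ mm p.1.1 + p.1.2, p.2)) =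
            fun p : (ℤ × ℕ) × ℕ => pre ℓ mm p.1.1 + p.1.2 := rfl
        rw [hcomp]
        have heq2 : (L.map fun p => pre ℓ mm p.1.1 + p.1.2) =
            (L.map Prod.fst).map (fun c => pre ℓ mm c.1 + c.2) := by
          rw [List.map_map]; rfl
        rw [heq2]
        apply List.Nodup.map_on _ h3
        intro x hx y hy hxy
        obtain ⟨ix, hix, hvix, hjx⟩ := hvalc x hx
        obtain ⟨iy, hiy, hviy, hjy⟩ := hvalc y hy
        simp only [hvix, hviy] at hxy
        obtain ⟨h5, h6⟩ := idx_inj ℓ mm hix hiy hjx hjy hxy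
        subst h5
        exact Prod.ext (hvix.trans hviy.symm) h6)
      (by
        intro p hp
        obtain ⟨q, hq, hq2⟩ := List.mem_map.mp hp
        obtain ⟨i, hi, hvi, hj, hpsi⟩ := hval q hq
        subst hq2
        constructor
        · have := pre_add_count_le ℓ mm hi
          rw [hvi]
          simp only
          omega
        · simp only
          omega)
  refine ⟨g, hg1, ?_⟩
  rw [h1, ← hg2, List.map_map]
  congr 1
  apply List.map_congr_left
  intro p hp
  simp only [Function.comp_apply, Wt, if_neg (hvz p hp)]

/-- the coverage interface: any boxed syndrome can be completed to zero -/
lemma cover (S : ℕ)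
    (hS : ∃ g : ℕ → ℕ, (∀ i, g i ≤ i) ∧
      S = ∑ i ∈ Finset.range (kk ℓ mm), wIdx (kk ℓ mm) i * g i) :
    ∃ p q : ℕ, q ≤ p ∧ p ≤ kk ℓ mm ∧
      (S + aR (kk ℓ mm) * p + bR (kk ℓ mm) * q) % mM (kk ℓ mm) = 0 := by
  obtain ⟨g, hg, rfl⟩ := hS
  have h6 := (schemeOK (kk ℓ mm)).2.2.2.2.2
  obtain ⟨p, hp, q, hq, h⟩ := h6 (fun i => ⟨g i.1, by have := hg i.1; omega⟩)
  refine ⟨p, q, by simpa using Nat.lt_succ_iff.mp (Finset.mem_range.mp hq),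
    Nat.lt_succ_iff.mp (Finset.mem_range.mp hp), ?_⟩
  rw [Finset.sum_range fun i => wIdx (kk ℓ mm) i * g i]
  exact h

end Params2


lemma ext_exists (ℓ : ℕ) (mm : ℕ → ℕ) (σ : List ℤ) (hσ : (↑σ : Multiset ℤ) = Kms ℓ mm) :
    ∃ α : List ℤ,
      (↑α : Multiset ℤ) = Mfull ℓ mm ∧
      α.filter (fun x => decide (x ≠ zz ℓ)) = σ ∧
      FF (Wt ℓ mm) (fun _ => 0) α % mM (kk ℓ mm) = 0 := by
  obtain ⟨hlen, hmemlt, hzero⟩ := sigma_facts ℓ mm hσ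
  obtain ⟨p, q, hqp, hpk, hmod⟩ := cover ℓ mm _ (F_sigma_rep ℓ mm hσ)
  set z := zz ℓ with hz
  set k := kk ℓ mm with hk
  set l1 := σ.take (k - p) with hl1
  set r1 := σ.drop (k - p) with hr1
  set α₁ := l1 ++ z :: r1 with hα₁
  have hl1len : l1.length = k - p := by
    rw [hl1, List.length_take, hlen]; omega
  have hr1len : r1.length = p := by
    rw [hr1, List.length_drop, hlen]; omega
  have hl1sub : ∀ u ∈ l1, u ∈ σ := fun u hu => (List.take_sublist _ _).subset hu
  have hr1sub : ∀ u ∈ r1, u ∈ σ := fun u hu => (List.drop_sublist _ _).subset hu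
  have hl1r1 : l1 ++ r1 = σ := List.take_append_drop _ _
  have hcl1 : l1.count z = 0 := by
    rw [hl1]
    have := (List.take_sublist (k - p) σ).count_le z
    omega
  have hcr1 : r1.count z = 0 := by
    rw [hr1]
    have := (List.drop_sublist (k - p) σ).count_le z
    omega
  have hF1 : FF (Wt ℓ mm) (fun _ => 0) α₁ = FF (Wt ℓ mm) (fun _ => 0) σ + aR k * p := by
    rw [hα₁, FF_insert (Wt ℓ mm) l1 r1 _ (fun u hu => le_of_lt (hmemlt u (hl1sub u hu)))
      (fun u hu => hmemlt u (hr1sub u hu)), hl1r1, hcl1, hr1len]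
    have : Wt ℓ mm z 0 = aR k := by rw [hz, Wt, if_pos rfl, if_pos rfl, hk]
    simp [this]
  have hα₁len : α₁.length = k + 1 := by
    rw [hα₁, List.length_append, List.length_cons, hl1len, hr1len]; omega
  set l2 := α₁.take (k + 1 - q) with hl2
  set r2 := α₁.drop (k + 1 - q) with hr2
  set α := l2 ++ z :: r2 with hα
  have hl2r2 : l2 ++ r2 = α₁ := List.take_append_drop _ _
  have hdropr2 : r2 = σ.drop (k - q) := by
    rw [hr2, hα₁, show k + 1 - q = l1.length + (p + 1 - q) by rw [hl1len]; omega,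
      List.drop_length_add_append, show p + 1 - q = (p - q) + 1 by omega, List.drop_succ_cons,
      hr1, List.drop_drop]
    congr 1
    omega
  have hr2sub : ∀ u ∈ r2, u ∈ σ := by
    rw [hdropr2]; exact fun u hu => (List.drop_sublist _ _).subset hu
  have hr2len : r2.length = q := by
    rw [hdropr2, List.length_drop, hlen]; omega
  have hcr2 : r2.count z = 0 := by
    rw [hdropr2]
    have := (List.drop_sublist (k - q) σ).count_le z
    omega
  have hcα₁ : α₁.count z = 1 := by
    rw [hα₁, List.count_append, List.count_cons_self, hcl1, hcr1]
  have hcl2 : l2.count z = 1 := by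
    have : l2.count z + r2.count z = 1 := by rw [← List.count_append, hl2r2, hcα₁]
    omega
  have hl2sub : ∀ u ∈ l2, u ∈ α₁ := fun u hu => (List.take_sublist _ _).subset hu
  have hα₁le : ∀ u ∈ α₁, u ≤ z := by
    intro u hu
    rw [hα₁] at hu
    rcases List.mem_append.mp hu with h | h
    · exact le_of_lt (hmemlt u (hl1sub u h))
    · rcases List.mem_cons.mp h with rfl | h
      · exact le_refl _
      · exact le_of_lt (hmemlt u (hr1sub u h))
  have hF2 : FF (Wt ℓ mm) (fun _ => 0) α =
      FF (Wt ℓ mm) (fun _ => 0) σ + aR k * p + bR k * q := by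
    rw [hα, FF_insert (Wt ℓ mm) l2 r2 _ (fun u hu => hα₁le u (hl2sub u hu))
      (fun u hu => hmemlt u (hr2sub u hu)), hl2r2, hcl2, hr2len, hF1]
    have : Wt ℓ mm z (0 + 1) = bR k := by rw [hz, Wt, if_pos rfl, if_neg (by omega), hk]
    rw [this]
  -- multiset
  have hms1 : (↑α₁ : Multiset ℤ) = z ::ₘ ↑σ := by
    rw [hα₁, Multiset.coe_eq_coe.mpr (List.perm_middle (a := z) (l₁ := l1) (l₂ := r1)),
      ← Multiset.cons_coe, hl1r1]
  have hms2 : (↑α : Multiset ℤ) = z ::ₘ z ::ₘ ↑σ := by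
    rw [hα, Multiset.coe_eq_coe.mpr (List.perm_middle (a := z) (l₁ := l2) (l₂ := r2)),
      ← Multiset.cons_coe, hl2r2, hms1]
  refine ⟨α, ?_, ?_, ?_⟩
  · rw [hms2, hσ]
    ext a
    rcases eq_or_ne a z with rfl | h
    · simp [Mfull, Multiset.count_cons_self, Multiset.count_add,
        Multiset.count_replicate_self, hz]
    · rw [Multiset.count_cons_of_ne h, Multiset.count_cons_of_ne h, Mfull, Multiset.count_add,
        Multiset.count_replicate, if_neg (Ne.symm h), add_zero]
  · have hfilz : ∀ (L : List ℤ), (∀ u ∈ L, u < z) → L.filter (fun x => decide (x ≠ z)) = L := by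
      intro L h
      apply List.filter_eq_self.mpr
      intro a ha
      simpa using ne_of_lt (h a ha)
    have hzz : (fun x => decide (x ≠ z)) z = false := by simp
    rw [hα, List.filter_append, List.filter_cons_of_neg (by simp),
      ← List.filter_append, hl2r2, hα₁, List.filter_append,
      List.filter_cons_of_neg (by simp), ← List.filter_append, hl1r1]
    apply hfilz
    exact hmemlt
  · rw [hF2]; exact hmod


lemma adjPerm {σ π : List ℤ} (h : AdjTrans σ π) : σ.Perm π := by
  obtain ⟨l₁, l₂, a, b, _, rfl, rfl⟩ := h
  exact List.Perm.append_left _ (List.Perm.swap b a l₂)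

lemma stepsToPerm : ∀ {n : ℕ} {σ π : List ℤ}, StepsTo n σ π → σ.Perm π := by
  intro n
  induction n with
  | zero => intro σ π h; rw [show σ = π from h]
  | succ n ih =>
      rintro σ π ⟨τ, h1, h2⟩
      exact (adjPerm h1).trans (ih h2)

lemma stepsTo_trans : ∀ {n₁ n₂ : ℕ} {σ τ π : List ℤ},
    StepsTo n₁ σ τ → StepsTo n₂ τ π → StepsTo (n₁ + n₂) σ π := by
  intro n₁
  induction n₁ with
  | zero =>
      intro n₂ σ τ π h1 h2
      rw [show σ = τ from h1, Nat.zero_add]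
      exact h2
  | succ n ih =>
      rintro n₂ σ τ π ⟨ρ, h1, h2⟩ h3
      exact (by rw [Nat.succ_add]; exact ⟨ρ, h1, ih h2 h3⟩ : StepsTo (n + 1 + n₂) σ π)

lemma stepsTo_one {σ π : List ℤ} (h : AdjTrans σ π) : StepsTo 1 σ π := ⟨π, h, rfl⟩

lemma stepsTo_cons {a : ℤ} : ∀ {n : ℕ} {σ π : List ℤ},
    StepsTo n σ π → StepsTo n (a :: σ) (a :: π) := by
  intro n
  induction n with
  | zero => intro σ π h; rw [show σ = π from h]; rfl
  | succ n ih =>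
      rintro σ π ⟨τ, ⟨l₁, l₂, x, y, hne, rfl, rfl⟩, h2⟩
      exact ⟨a :: (l₁ ++ y :: x :: l₂), ⟨a :: l₁, l₂, x, y, hne, rfl, rfl⟩, ih h2⟩

lemma move_front {b : ℤ} : ∀ {α : List ℤ}, b ∈ α → ∃ n u, StepsTo n α (b :: u) := by
  intro α
  induction α with
  | nil => intro h; exact absurd h (List.not_mem_nil)
  | cons a α ih =>
      intro h
      by_cases hab : a = b
      · exact ⟨0, α, by rw [hab]; rfl⟩
      · have hb : b ∈ α := by
          rcases List.mem_cons.mp h with h | h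
          · exact absurd h.symm hab
          · exact h
        obtain ⟨n, u, hn⟩ := ih hb
        refine ⟨n + 1, a :: u, stepsTo_trans (stepsTo_cons hn) (stepsTo_one ?_)⟩
        exact ⟨[], u, a, b, hab, rfl, rfl⟩

lemma reach : ∀ {β α : List ℤ}, α.Perm β → ∃ n, StepsTo n α β := by
  intro β
  induction β with
  | nil => intro α h; exact ⟨0, h.eq_nil⟩
  | cons b β ih =>
      intro α h
      have hb : b ∈ α := h.mem_iff.mpr (by simp)
      obtain ⟨n, u, hn⟩ := move_front hb
      have hperm : (b :: u).Perm (b :: β) := ((stepsToPerm hn).symm).trans h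
      obtain ⟨n', hn'⟩ := ih ((List.perm_cons b).mp hperm)
      exact ⟨n + n', stepsTo_trans hn (stepsTo_cons hn')⟩

/-- two decompositions of a list at the same occurrence of `x` agree -/
lemma occ_lemma {x : ℤ} : ∀ (u u' v v' : List ℤ), u ++ x :: v = u' ++ x :: v' →
    u.count x = u'.count x → u = u' ∧ v = v' := by
  intro u
  induction u with
  | nil =>
      intro u' v v' h hc
      cases u' with
      | nil => simpa using h
      | cons w u'' =>
          exfalso
          simp only [List.nil_append, List.cons_append, List.cons.injEq] at h
          obtain ⟨rfl, _⟩ := h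
          simp [List.count_cons_self] at hc
  | cons a u₀ ih =>
      intro u' v v' h hc
      cases u' with
      | nil =>
          exfalso
          simp only [List.cons_append, List.nil_append, List.cons.injEq] at h
          obtain ⟨rfl, _⟩ := h
          simp [List.count_cons_self] at hc
      | cons w u''' =>
          simp only [List.cons_append, List.cons.injEq] at h
          obtain ⟨rfl, h2⟩ := h
          have hc' : u₀.count x = u'''.count x := by
            simp only [List.count_cons] at hc
            omega
          obtain ⟨h3, h4⟩ := ih u''' v v' h2 hc'
          exact ⟨by rw [h3], h4⟩

section Dist

variable (ℓ : ℕ) (mm : ℕ → ℕ)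

lemma valid_of_split {γ l r : List ℤ} {x : ℤ} (hm : (↑γ : Multiset ℤ) = Mfull ℓ mm)
    (hγ : γ = l ++ x :: r) : x ∈ Mfull ℓ mm ∧ l.count x < (Mfull ℓ mm).count x := by
  subst hγ
  constructor
  · rw [← hm]
    simp
  · rw [← hm, Multiset.coe_count, List.count_append, List.count_cons_self]
    omega

lemma key1 {x y : ℤ} (hyx : y < x) (l r : List ℤ)
    (hm : (↑(l ++ x :: y :: r) : Multiset ℤ) = Mfull ℓ mm) :
    FF (Wt ℓ mm) (fun _ => 0) (l ++ x :: y :: r) =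
      FF (Wt ℓ mm) (fun _ => 0) (l ++ y :: x :: r) + Wt ℓ mm x (l.count x) ∧
    1 ≤ Wt ℓ mm x (l.count x) ∧ Wt ℓ mm x (l.count x) ≤ kk ℓ mm + 2 := by
  obtain ⟨hv, hj⟩ := valid_of_split ℓ mm hm (rfl : l ++ x :: y :: r = l ++ x :: (y :: r))
  obtain ⟨h1, h2⟩ := W_valid ℓ mm hv hj
  refine ⟨?_, h1, h2⟩
  have := FF_swap (Wt ℓ mm) hyx l r (fun _ => 0)
  simpa using this

lemma not_one_step {α β : List ℤ} (hA : (↑α : Multiset ℤ) = Mfull ℓ mm)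
    (hB : (↑β : Multiset ℤ) = Mfull ℓ mm)
    (hFA : FF (Wt ℓ mm) (fun _ => 0) α % mM (kk ℓ mm) = 0)
    (hFB : FF (Wt ℓ mm) (fun _ => 0) β % mM (kk ℓ mm) = 0)
    (h : AdjTrans α β) : False := by
  have hsch5 := (schemeOK (kk ℓ mm)).2.2.2.2.1
  obtain ⟨l, r, a, b, hne, rfl, rfl⟩ := h
  have hdA : mM (kk ℓ mm) ∣ FF (Wt ℓ mm) (fun _ => 0) (l ++ a :: b :: r) :=
    Nat.dvd_of_mod_eq_zero hFA
  have hdB : mM (kk ℓ mm) ∣ FF (Wt ℓ mm) (fun _ => 0) (l ++ b :: a :: r) :=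
    Nat.dvd_of_mod_eq_zero hFB
  rcases hne.lt_or_gt with hlt | hlt
  · -- a < b : the second list has the inversion
    obtain ⟨heq, h1, h2⟩ := key1 ℓ mm hlt l r hB
    have : mM (kk ℓ mm) ∣ Wt ℓ mm b (l.count b) := by
      have := Nat.dvd_sub hdB hdA
      rwa [show FF (Wt ℓ mm) (fun _ => 0) (l ++ b :: a :: r) -
          FF (Wt ℓ mm) (fun _ => 0) (l ++ a :: b :: r) = Wt ℓ mm b (l.count b) by omega] at this
    have := Nat.le_of_dvd (by omega) this
    omega
  · obtain ⟨heq, h1, h2⟩ := key1 ℓ mm hlt l r hA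
    have : mM (kk ℓ mm) ∣ Wt ℓ mm a (l.count a) := by
      have := Nat.dvd_sub hdA hdB
      rwa [show FF (Wt ℓ mm) (fun _ => 0) (l ++ a :: b :: r) -
          FF (Wt ℓ mm) (fun _ => 0) (l ++ b :: a :: r) = Wt ℓ mm a (l.count a) by omega] at this
    have := Nat.le_of_dvd (by omega) this
    omega

lemma not_two_steps {α τ β : List ℤ} (hne : α ≠ β)
    (hA : (↑α : Multiset ℤ) = Mfull ℓ mm) (hB : (↑β : Multiset ℤ) = Mfull ℓ mm)
    (hFA : FF (Wt ℓ mm) (fun _ => 0) α % mM (kk ℓ mm) = 0)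
    (hFB : FF (Wt ℓ mm) (fun _ => 0) β % mM (kk ℓ mm) = 0)
    (h1 : AdjTrans α τ) (h2 : AdjTrans τ β) : False := by
  have hsch5 := (schemeOK (kk ℓ mm)).2.2.2.2.1
  have hT : (↑τ : Multiset ℤ) = Mfull ℓ mm :=
    (Multiset.coe_eq_coe.mpr (adjPerm h1)).symm.trans hA
  have hdA : mM (kk ℓ mm) ∣ FF (Wt ℓ mm) (fun _ => 0) α := Nat.dvd_of_mod_eq_zero hFA
  have hdB : mM (kk ℓ mm) ∣ FF (Wt ℓ mm) (fun _ => 0) β := Nat.dvd_of_mod_eq_zero hFB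
  obtain ⟨l₁, r₁, a₁, b₁, hne₁, hα₁, hτ₁⟩ := h1
  obtain ⟨l₂, r₂, a₂, b₂, hne₂, hτ₂, hβ₂⟩ := h2
  rcases hne₁.lt_or_gt with hlt₁ | hlt₁ <;> rcases hne₂.lt_or_gt with hlt₂ | hlt₂
  · -- a₁ < b₁ (α → τ moves larger b₁ left), a₂ < b₂ (τ → β moves larger b₂ left)
    -- FF τ = FF α + W₁ ; FF β = FF τ + W₂   : same sign
    obtain ⟨heq₁, hw₁, hw₁'⟩ := key1 ℓ mm hlt₁ l₁ r₁ (hτ₁ ▸ hT)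
    obtain ⟨heq₂, hw₂, hw₂'⟩ := key1 ℓ mm hlt₂ l₂ r₂ (hβ₂ ▸ hB)
    rw [← hτ₁, ← hα₁] at heq₁
    rw [← hβ₂, ← hτ₂] at heq₂
    have hd : mM (kk ℓ mm) ∣ Wt ℓ mm b₁ (l₁.count b₁) + Wt ℓ mm b₂ (l₂.count b₂) := by
      have := Nat.dvd_sub hdB hdA
      rwa [show FF (Wt ℓ mm) (fun _ => 0) β - FF (Wt ℓ mm) (fun _ => 0) α =
        Wt ℓ mm b₁ (l₁.count b₁) + Wt ℓ mm b₂ (l₂.count b₂) by omega] at this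
    have := Nat.le_of_dvd (by omega) hd
    omega
  · -- a₁ < b₁ : FF τ = FF α + W₁ ;  b₂ < a₂ : FF τ = FF β + W₂  : opposite signs
    obtain ⟨heq₁, hw₁, hw₁'⟩ := key1 ℓ mm hlt₁ l₁ r₁ (hτ₁ ▸ hT)
    obtain ⟨heq₂, hw₂, hw₂'⟩ := key1 ℓ mm hlt₂ l₂ r₂ (hτ₂ ▸ hT)
    rw [← hτ₁, ← hα₁] at heq₁
    rw [← hτ₂, ← hβ₂] at heq₂
    -- W₁ = W₂
    have hWeq : Wt ℓ mm b₁ (l₁.count b₁) = Wt ℓ mm a₂ (l₂.count a₂) := by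
      rcases le_total (Wt ℓ mm b₁ (l₁.count b₁)) (Wt ℓ mm a₂ (l₂.count a₂)) with hle | hle
      · have hd : mM (kk ℓ mm) ∣ Wt ℓ mm a₂ (l₂.count a₂) - Wt ℓ mm b₁ (l₁.count b₁) := by
          have := Nat.dvd_sub hdA hdB
          rwa [show FF (Wt ℓ mm) (fun _ => 0) α - FF (Wt ℓ mm) (fun _ => 0) β =
            Wt ℓ mm a₂ (l₂.count a₂) - Wt ℓ mm b₁ (l₁.count b₁) by omega] at this
        have := Nat.eq_zero_of_dvd_of_lt hd
        omega
      · have hd : mM (kk ℓ mm) ∣ Wt ℓ mm b₁ (l₁.count b₁) - Wt ℓ mm a₂ (l₂.count a₂) := by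
          have := Nat.dvd_sub hdB hdA
          rwa [show FF (Wt ℓ mm) (fun _ => 0) β - FF (Wt ℓ mm) (fun _ => 0) α =
            Wt ℓ mm b₁ (l₁.count b₁) - Wt ℓ mm a₂ (l₂.count a₂) by omega] at this
        have := Nat.eq_zero_of_dvd_of_lt hd
        omega
    -- injectivity: same value and same occurrence
    have hv₁ := valid_of_split ℓ mm hA (by rw [hα₁]; simp :
      α = (l₁ ++ [a₁]) ++ b₁ :: r₁)
    have hv₂ := valid_of_split ℓ mm hB (by rw [hβ₂]; simp :
      β = (l₂ ++ [b₂]) ++ a₂ :: r₂)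
    have hc₁ : (l₁ ++ [a₁]).count b₁ = l₁.count b₁ := by
      rw [List.count_append]
      simp [List.count_singleton', ne_of_gt hlt₁, (ne_of_gt hlt₁).symm]
    have hc₂ : (l₂ ++ [b₂]).count a₂ = l₂.count a₂ := by
      rw [List.count_append]
      simp [List.count_singleton', ne_of_lt hlt₂]
    rw [hc₁] at hv₁
    rw [hc₂] at hv₂
    obtain ⟨hxx, hcc⟩ := W_inj ℓ mm hv₁.1 hv₁.2 hv₂.1 hv₂.2 hWeq
    -- geometry : both swaps touch the same occurrence, so β = α
    subst hxx
    have hττ : l₁ ++ b₁ :: (a₁ :: r₁) = l₂ ++ b₁ :: (b₂ :: r₂) := by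
      rw [← hτ₁, hτ₂]
    obtain ⟨hpre, hsuf⟩ := occ_lemma _ _ _ _ hττ hcc
    apply hne
    obtain ⟨rfl, rfl⟩ : a₁ = b₂ ∧ r₁ = r₂ := by simpa using hsuf
    rw [hα₁, hβ₂, hpre]
  · -- b₁ < a₁ : FF α = FF τ + W₁ ; a₂ < b₂ : FF β = FF τ + W₂ : opposite signs
    obtain ⟨heq₁, hw₁, hw₁'⟩ := key1 ℓ mm hlt₁ l₁ r₁ (hα₁ ▸ hA)
    obtain ⟨heq₂, hw₂, hw₂'⟩ := key1 ℓ mm hlt₂ l₂ r₂ (hβ₂ ▸ hB)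
    rw [← hα₁, ← hτ₁] at heq₁
    rw [← hβ₂, ← hτ₂] at heq₂
    have hWeq : Wt ℓ mm a₁ (l₁.count a₁) = Wt ℓ mm b₂ (l₂.count b₂) := by
      rcases le_total (Wt ℓ mm a₁ (l₁.count a₁)) (Wt ℓ mm b₂ (l₂.count b₂)) with hle | hle
      · have hd : mM (kk ℓ mm) ∣ Wt ℓ mm b₂ (l₂.count b₂) - Wt ℓ mm a₁ (l₁.count a₁) := by
          have := Nat.dvd_sub hdB hdA
          rwa [show FF (Wt ℓ mm) (fun _ => 0) β - FF (Wt ℓ mm) (fun _ => 0) α =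
            Wt ℓ mm b₂ (l₂.count b₂) - Wt ℓ mm a₁ (l₁.count a₁) by omega] at this
        have := Nat.eq_zero_of_dvd_of_lt hd
        omega
      · have hd : mM (kk ℓ mm) ∣ Wt ℓ mm a₁ (l₁.count a₁) - Wt ℓ mm b₂ (l₂.count b₂) := by
          have := Nat.dvd_sub hdA hdB
          rwa [show FF (Wt ℓ mm) (fun _ => 0) α - FF (Wt ℓ mm) (fun _ => 0) β =
            Wt ℓ mm a₁ (l₁.count a₁) - Wt ℓ mm b₂ (l₂.count b₂) by omega] at this
        have := Nat.eq_zero_of_dvd_of_lt hd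
        omega
    have hv₁ := valid_of_split ℓ mm hA (hα₁ : α = l₁ ++ a₁ :: (b₁ :: r₁))
    have hv₂ := valid_of_split ℓ mm hB (hβ₂ : β = l₂ ++ b₂ :: (a₂ :: r₂))
    obtain ⟨hxx, hcc⟩ := W_inj ℓ mm hv₁.1 hv₁.2 hv₂.1 hv₂.2 hWeq
    subst hxx
    have hττ : (l₁ ++ [b₁]) ++ a₁ :: r₁ = (l₂ ++ [a₂]) ++ a₁ :: r₂ := by
      simp only [List.append_assoc, List.singleton_append]
      rw [← hτ₁, hτ₂]
    have hcnt : (l₁ ++ [b₁]).count a₁ = (l₂ ++ [a₂]).count a₁ := by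
      rw [List.count_append, List.count_append]
      simp [List.count_singleton', ne_of_lt hlt₁, ne_of_lt hlt₂, hcc]
    obtain ⟨hpre, hsuf⟩ := occ_lemma _ _ _ _ hττ hcnt
    obtain ⟨hl, hb⟩ := List.append_inj' hpre rfl
    have hb' : b₁ = a₂ := by simpa using hb
    apply hne
    rw [hα₁, hβ₂, hl, hb', hsuf]
  · -- b₁ < a₁, b₂ < a₂ : same sign
    obtain ⟨heq₁, hw₁, hw₁'⟩ := key1 ℓ mm hlt₁ l₁ r₁ (hα₁ ▸ hA)
    obtain ⟨heq₂, hw₂, hw₂'⟩ := key1 ℓ mm hlt₂ l₂ r₂ (hτ₂ ▸ hT)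
    rw [← hα₁, ← hτ₁] at heq₁
    rw [← hτ₂, ← hβ₂] at heq₂
    have hd : mM (kk ℓ mm) ∣ Wt ℓ mm a₁ (l₁.count a₁) + Wt ℓ mm a₂ (l₂.count a₂) := by
      have := Nat.dvd_sub hdA hdB
      rwa [show FF (Wt ℓ mm) (fun _ => 0) α - FF (Wt ℓ mm) (fun _ => 0) β =
        Wt ℓ mm a₁ (l₁.count a₁) + Wt ℓ mm a₂ (l₂.count a₂) by omega] at this
    have := Nat.le_of_dvd (by omega) hd
    omega

lemma dist3 {α β : List ℤ} (hne : α ≠ β)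
    (hA : (↑α : Multiset ℤ) = Mfull ℓ mm) (hB : (↑β : Multiset ℤ) = Mfull ℓ mm)
    (hFA : FF (Wt ℓ mm) (fun _ => 0) α % mM (kk ℓ mm) = 0)
    (hFB : FF (Wt ℓ mm) (fun _ => 0) β % mM (kk ℓ mm) = 0) : 3 ≤ dK α β := by
  have hperm : α.Perm β := Multiset.coe_eq_coe.mp (hA.trans hB.symm)
  obtain ⟨N, hN⟩ := reach hperm
  have hnonempty : {n | StepsTo n α β}.Nonempty := ⟨N, hN⟩
  have hmem := Nat.sInf_mem hnonempty
  show 3 ≤ sInf {n | StepsTo n α β}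
  by_contra hlt
  push_neg at hlt
  set n := sInf {n | StepsTo n α β} with hn
  have hmem' : StepsTo n α β := hmem
  match n, hlt, hmem' with
  | 0, _, hmem' => exact hne hmem'
  | 1, _, hmem' =>
      obtain ⟨τ, h1, h2⟩ := hmem'
      exact not_one_step ℓ mm hA hB hFA hFB ((show τ = β from h2) ▸ h1)
  | 2, _, hmem' =>
      obtain ⟨τ, h1, h2⟩ := hmem'
      obtain ⟨τ', h2, h3⟩ := h2
      exact not_two_steps ℓ mm hne hA hB hFA hFB h1 ((show τ' = β from h3) ▸ h2)
  | (n+3), hlt, _ => omega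

end Dist

end S19


/-- Example 5. Let `K = {1^{m 1}, 2^{m 2}, …, ℓ^{m ℓ}}` be a multiset
with `k = ∑ m i` elements, let `R = {ℓ+1, ℓ+1}`.  Then there exists a systematic
single-error-correcting code `C ⊆ S(K ∪ R)`: every multi-permutation `σ ∈ S(K)` is
obtained by deleting the two occurrences of `ℓ + 1` from exactly one codeword of `C`, and
distinct codewords of `C` are at Kendall τ-distance at least `3`. -/
theorem stmt19 (ℓ : ℕ) (m : ℕ → ℕ) (hm : ∀ i, 1 ≤ i → i ≤ ℓ → 0 < m i) :
    ∃ C : Set (List ℤ),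
      (∀ α ∈ C, (↑α : Multiset ℤ) =
        (∑ i ∈ Finset.Icc 1 ℓ, Multiset.replicate (m i) (i : ℤ)) +
          Multiset.replicate 2 ((ℓ : ℤ) + 1)) ∧
      (∀ σ : List ℤ,
        (↑σ : Multiset ℤ) = ∑ i ∈ Finset.Icc 1 ℓ, Multiset.replicate (m i) (i : ℤ) →
        ∃! α, α ∈ C ∧ α.filter (fun x => decide (x ≠ (ℓ : ℤ) + 1)) = σ) ∧
      (∀ α ∈ C, ∀ β ∈ C, α ≠ β → 3 ≤ dK α β) := by
  classical
  refine ⟨{α | ∃ σ : List ℤ, ∃ h : (↑σ : Multiset ℤ) = S19.Kms ℓ m,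
    α = (S19.ext_exists ℓ m σ h).choose}, ?_, ?_, ?_⟩
  · rintro α ⟨σ, h, rfl⟩
    exact (S19.ext_exists ℓ m σ h).choose_spec.1
  · intro σ hσ
    have hσ' : (↑σ : Multiset ℤ) = S19.Kms ℓ m := hσ
    refine ⟨(S19.ext_exists ℓ m σ hσ').choose, ⟨⟨σ, hσ', rfl⟩, ?_⟩, ?_⟩
    · exact (S19.ext_exists ℓ m σ hσ').choose_spec.2.1
    · rintro β ⟨⟨σ', h', rfl⟩, hfil⟩
      have hss : σ' = σ := by
        rw [← (S19.ext_exists ℓ m σ' h').choose_spec.2.1]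
        exact hfil
      subst hss
      rfl
  · rintro α ⟨σa, ha, rfl⟩ β ⟨σb, hb, rfl⟩ hne
    have sa := (S19.ext_exists ℓ m σa ha).choose_spec
    have sb := (S19.ext_exists ℓ m σb hb).choose_spec
    exact S19.dist3 ℓ m hne sa.1 sb.1 sa.2.2 sb.2.2
end
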